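/- arXiv:2201.00782 — 5 statements merged into one kernel-verified Lean document; each statement's English description precedes it below -/
import Mathlib

section
/- For every natural number n, the number of binary words of length n such that every maximal factor of the form 0^a 1^b with a > 0 satisfies a > b equals the Fibonacci number F(n+2) (with F(1)=F(2)=1). -/
/-- `isValid c d w` says every maximal factor of `w` of the form `0^a 1^b`
with `a > 0` satisfies `a * (c/d) > b`, i.e. `c*a > d*b`.
Here `false` plays the role of `0` and `true` of `1`; maximality is expressed
by requiring the prefix to end with `1` (or be empty) and the suffix to start
with `0` (or be empty). -/
def isValid (c d : ℕ) (w : List Bool) : Prop :=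
  ∀ p s : List Bool, ∀ a b : ℕ,
    w = p ++ List.replicate a false ++ List.replicate b true ++ s →
    (p = [] ∨ p.getLast? = some true) →
    (s = [] ∨ s.head? = some false) →
    0 < a → d * b < c * a

/-- number of words of length `n` in `W_{c/d,n}` -/
noncomputable def wcount (c d n : ℕ) : ℕ :=
  Nat.card {w : List Bool // w.length = n ∧ isValid c d w}

/-! ### An automaton recognizing `isValid 1 1` -/

/-- state: `k` counter, phase `false` = reading zeros (`k` = zeros so far),
phase `true` = reading ones (`k` = slack). -/
def chk : ℕ → Bool → List Bool → Bool
  | _, _, [] => true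
  | k, false, false :: w => chk (k+1) false w
  | _, true, false :: w => chk 1 false w
  | k, _, true :: w => decide (2 ≤ k) && chk (k-1) true w

def good : List Bool → Bool
  | [] => true
  | true :: w => good w
  | false :: w => chk 1 false w

/-! ### list helpers -/

lemma prefix_replicate {p t : List Bool} {n : ℕ} {c : Bool}
    (h : p ++ t = List.replicate n c) : p = List.replicate p.length c := by
  rw [List.eq_replicate_length]
  intro x hx
  have hx' : x ∈ p ++ t := List.mem_append_left t hx
  rw [h] at hx'
  exact List.eq_of_mem_replicate hx'

lemma repl_cancel {c : Bool} : ∀ {x y : ℕ} {u v : List Bool},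
    List.replicate x c ++ u = List.replicate y c ++ v →
    (u = [] ∨ u.head? = some (!c)) → (v = [] ∨ v.head? = some (!c)) →
    x = y ∧ u = v := by
  intro x
  induction x with
  | zero =>
    intro y u v h hu hv
    cases y with
    | zero => simpa using h
    | succ y =>
      exfalso
      rw [List.replicate_succ] at h
      simp only [List.replicate_zero, List.nil_append, List.cons_append] at h
      rcases hu with hu | hu
      · subst hu; simp at h
      · rw [h] at hu; simp at hu
  | succ x ih =>
    intro y u v h hu hv
    cases y with
    | zero =>
      exfalso
      rw [List.replicate_succ] at h
      simp only [List.replicate_zero, List.nil_append, List.cons_append] at h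
      rcases hv with hv | hv
      · subst hv; simp at h
      · rw [← h] at hv; simp at hv
    | succ y =>
      rw [List.replicate_succ, List.replicate_succ] at h
      simp only [List.cons_append, List.cons.injEq] at h
      obtain ⟨xy, uv⟩ := ih h.2 hu hv
      exact ⟨by omega, uv⟩

lemma getLast?_append_repl_true (u : List Bool) (b : ℕ) :
    (u ++ List.replicate (b+1) true).getLast? = some true := by
  rw [List.replicate_succ', ← List.append_assoc]
  exact List.getLast?_concat

/-! ### closure lemmas for `isValid 1 1` -/

lemma valid_nil : isValid 1 1 [] := by
  intro p s a b h _ _ ha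
  exfalso
  have := h.symm
  simp only [List.append_eq_nil_iff, List.replicate_eq_nil_iff] at this
  omega

lemma valid_replicate_false (k : ℕ) : isValid 1 1 (List.replicate k false) := by
  intro p s a b h _ _ ha
  rcases Nat.eq_zero_or_pos b with hb | hb
  · subst hb; simpa using ha
  · exfalso
    have ht : (true : Bool) ∈ List.replicate k false := by
      rw [h]
      refine List.mem_append_left _ (List.mem_append_right _ ?_)
      exact List.mem_replicate.2 ⟨by omega, rfl⟩
    simpa using List.eq_of_mem_replicate ht

lemma valid_cons_true (w : List Bool) :
    isValid 1 1 (true :: w) ↔ isValid 1 1 w := by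
  constructor
  · intro h p s a b hw hp hs ha
    refine h (true :: p) s a b (by simp [hw]) (Or.inr ?_) hs ha
    rcases hp with rfl | hp
    · rfl
    · cases p with
      | nil => rfl
      | cons q p' => rw [List.getLast?_cons_cons]; exact hp
  · intro h p s a b hw hp hs ha
    cases p with
    | nil =>
      exfalso
      obtain ⟨a', rfl⟩ : ∃ a', a = a' + 1 := ⟨a - 1, by omega⟩
      rw [List.replicate_succ] at hw
      simp at hw
    | cons q p' =>
      simp only [List.cons_append, List.cons.injEq] at hw
      obtain ⟨rfl, hw⟩ := hw
      refine h p' s a b hw ?_ hs ha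
      cases p' with
      | nil => exact Or.inl rfl
      | cons r p'' =>
        right
        rcases hp with hp | hp
        · simp at hp
        · rw [List.getLast?_cons_cons] at hp; exact hp

lemma not_valid_tight : ∀ (w : List Bool) (x y : ℕ), 0 < x → x ≤ y →
    ¬ isValid 1 1 (List.replicate x false ++ List.replicate y true ++ w) := by
  intro w
  induction w with
  | nil =>
    intro x y hx hxy h
    have := h [] [] x y (by simp) (Or.inl rfl) (Or.inl rfl) hx
    omega
  | cons c w' ih =>
    intro x y hx hxy h
    cases c with
    | false =>
      have := h [] (false :: w') x y (by simp) (Or.inl rfl) (Or.inr rfl) hx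
      omega
    | true =>
      refine ih x (y+1) hx (by omega) ?_
      have heq : List.replicate x false ++ List.replicate (y+1) true ++ w'
          = List.replicate x false ++ List.replicate y true ++ (true :: w') := by
        rw [List.replicate_succ' (n := y)]
        simp
      rw [heq]
      exact h

lemma block_inv {a b : ℕ} {s : List Bool} (ha : 0 < a) (hb : 0 < b ∨ s = [])
    (hs : s = [] ∨ s.head? = some false)
    (h : isValid 1 1 (List.replicate a false ++ List.replicate b true ++ s)) :
    b < a ∧ isValid 1 1 s := by
  constructor
  · have := h [] s a b (by simp) (Or.inl rfl) hs ha
    omega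
  · intro p2 s2 a' b' hseq hp2 hs2 ha'
    rcases Nat.eq_zero_or_pos b with hb0 | hbpos
    · subst hb0
      rcases hb with hb | rfl
      · omega
      · exfalso
        have := hseq.symm
        simp only [List.append_eq_nil_iff, List.replicate_eq_nil_iff] at this
        omega
    · refine h (List.replicate a false ++ List.replicate b true ++ p2) s2 a' b'
        (by rw [hseq]; simp) (Or.inr ?_) hs2 ha'
      cases p2 with
      | nil =>
        rw [List.append_nil]
        obtain ⟨b'', rfl⟩ : ∃ b'', b = b'' + 1 := ⟨b - 1, by omega⟩
        exact getLast?_append_repl_true _ _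
      | cons q p2' =>
        rcases hp2 with hp2 | hp2
        · simp at hp2
        · rw [List.getLast?_append_of_ne_nil _ (by simp)]
          exact hp2

lemma block_valid {a b : ℕ} {s : List Bool} (ha : 0 < a) (hba : b < a)
    (hb : 0 < b ∨ s = []) (hs : s = [] ∨ s.head? = some false)
    (hvs : isValid 1 1 s) :
    isValid 1 1 (List.replicate a false ++ List.replicate b true ++ s) := by
  intro p s' a' b' hw hp hs' ha'
  simp only [List.append_assoc] at hw
  suffices h : b' < a' by omega
  rcases hp with rfl | hp
  · -- p = []
    rw [List.nil_append] at hw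
    rcases Nat.eq_zero_or_pos b' with hb0 | hb'pos
    · omega
    · rcases Nat.eq_zero_or_pos b with hb0 | hbpos
      · -- b = 0, so s = []
        subst hb0
        rcases hb with hb | rfl
        · omega
        · exfalso
          have ht : (true : Bool) ∈ List.replicate a false := by
            rw [show List.replicate a false
                = List.replicate a false ++ (List.replicate 0 true ++ []) by simp, hw]
            refine List.mem_append_right _ (List.mem_append_left _ ?_)
            exact List.mem_replicate.2 ⟨by omega, rfl⟩
          simpa using List.eq_of_mem_replicate ht
      · -- b > 0, b' > 0 : cancel the replicates
        obtain ⟨haa, h2⟩ := repl_cancel (c := false) hw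
          (Or.inr (by obtain ⟨b'', rfl⟩ : ∃ b'', b = b'' + 1 := ⟨b - 1, by omega⟩
                      rw [List.replicate_succ]; simp))
          (Or.inr (by obtain ⟨b'', rfl⟩ : ∃ b'', b' = b'' + 1 := ⟨b' - 1, by omega⟩
                      rw [List.replicate_succ]; simp))
        obtain ⟨hbb, _⟩ := repl_cancel (c := true) h2
          (by rcases hs with rfl | hs
              · exact Or.inl rfl
              · exact Or.inr (by simpa using hs))
          (by rcases hs' with rfl | hs'
              · exact Or.inl rfl
              · exact Or.inr (by simpa using hs'))
        omega
  · -- p ≠ [] with getLast? p = some true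
    have hpne : p ≠ [] := by
      intro hnil; rw [hnil] at hp; simp at hp
    rcases List.append_eq_append_iff.mp hw with ⟨t1, hp1, h1⟩ | ⟨t1, hp1, h1⟩
    · -- p = 0^a ++ t1 , 1^b ++ s = t1 ++ Z
      rcases List.append_eq_append_iff.mp h1 with ⟨t2, ht2, h2⟩ | ⟨t2, ht2, h2⟩
      · -- t1 = 1^b ++ t2, s = t2 ++ Z
        have h3 := hvs t2 s' a' b' (by rw [h2]; simp) ?_ hs' ha'
        · omega
        cases t2 with
        | nil => exact Or.inl rfl
        | cons q t2' =>
          right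
          rw [hp1, ht2] at hp
          rw [List.getLast?_append_of_ne_nil _ (by simp),
            List.getLast?_append_of_ne_nil _ (by simp)] at hp
          exact hp
      · -- 1^b = t1 ++ t2, Z = t2 ++ s
        cases t2 with
        | nil =>
          have hseq : s = List.replicate a' false ++ (List.replicate b' true ++ s') := by
            simpa using h2.symm
          have h3 := hvs [] s' a' b' (by rw [hseq]; simp) (Or.inl rfl) hs' ha'
          omega
        | cons q t2' =>
          exfalso
          have hq : q = true := by
            have : q ∈ List.replicate b true := by
              rw [ht2]; exact List.mem_append_right _ (by simp)
            exact List.eq_of_mem_replicate this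
          obtain ⟨a'', rfl⟩ : ∃ a'', a' = a'' + 1 := ⟨a' - 1, by omega⟩
          rw [List.replicate_succ] at h2
          simp only [List.cons_append, List.cons.injEq] at h2
          rw [hq] at h2
          exact Bool.noConfusion h2.1
    · -- 0^a = p ++ t1
      exfalso
      have hfalse : p = List.replicate p.length false := prefix_replicate hp1.symm
      have hmem : p.getLast hpne ∈ List.replicate p.length false := by
        rw [← hfalse]; exact List.getLast_mem hpne
      have hx : p.getLast hpne = false := List.eq_of_mem_replicate hmem
      rw [List.getLast?_eq_getLast_of_ne_nil hpne, hx] at hp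
      exact Bool.noConfusion (Option.some.inj hp)

lemma chk_iff : ∀ w : List Bool,
    (∀ k, 1 ≤ k → (chk k false w = true ↔ isValid 1 1 (List.replicate k false ++ w))) ∧
    (∀ k j, 1 ≤ k → 1 ≤ j → (chk k true w = true ↔
      isValid 1 1 (List.replicate (k+j) false ++ List.replicate j true ++ w))) := by
  intro w
  induction w with
  | nil =>
    constructor
    · intro k hk
      simp only [chk, List.append_nil]
      exact ⟨fun _ => valid_replicate_false k, fun _ => trivial⟩
    · intro k j hk hj
      simp only [chk, List.append_nil]
      refine ⟨fun _ => ?_, fun _ => trivial⟩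
      have := block_valid (a := k+j) (b := j) (s := []) (by omega) (by omega)
        (Or.inl hj) (Or.inl rfl) valid_nil
      simpa using this
  | cons c w' ih =>
    obtain ⟨ih1, ih2⟩ := ih
    cases c with
    | false =>
      constructor
      · intro k hk
        have heq : List.replicate k false ++ (false :: w')
            = List.replicate (k+1) false ++ w' := by
          rw [List.replicate_succ' (n := k)]; simp
        rw [show chk k false (false :: w') = chk (k+1) false w' from rfl, heq]
        exact ih1 (k+1) (by omega)
      · intro k j hk hj
        rw [show chk k true (false :: w') = chk 1 false w' from rfl]
        rw [ih1 1 le_rfl]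
        have hfw : List.replicate 1 false ++ w' = false :: w' := rfl
        rw [hfw]
        constructor
        · intro hv
          exact block_valid (s := false :: w') (by omega) (by omega) (Or.inl hj)
            (Or.inr rfl) hv
        · intro hv
          exact (block_inv (s := false :: w') (by omega) (Or.inl hj)
            (Or.inr rfl) hv).2
    | true =>
      have htrue : ∀ j, List.replicate j true ++ (true :: w')
          = List.replicate (j+1) true ++ w' := by
        intro j; rw [List.replicate_succ' (n := j)]; simp
      constructor
      · intro k hk
        rw [show chk k false (true :: w')
            = (decide (2 ≤ k) && chk (k-1) true w') from rfl]
        by_cases h2 : 2 ≤ k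
        · have hiff := ih2 (k-1) 1 (by omega) le_rfl
          rw [show k - 1 + 1 = k from by omega] at hiff
          have hword : List.replicate k false ++ (true :: w')
              = List.replicate k false ++ List.replicate 1 true ++ w' := by simp
          rw [hword, decide_eq_true h2, Bool.true_and]
          exact hiff
        · have hk1 : k = 1 := by omega
          subst hk1
          simp only [decide_eq_true_eq, Bool.and_eq_true]
          constructor
          · intro h; exact absurd h.1 (by omega)
          · intro hv
            exfalso
            have : List.replicate 1 false ++ (true :: w')
                = List.replicate 1 false ++ List.replicate 1 true ++ w' := by simp
            rw [this] at hv
            exact not_valid_tight w' 1 1 (by omega) le_rfl hv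
      · intro k j hk hj
        rw [show chk k true (true :: w')
            = (decide (2 ≤ k) && chk (k-1) true w') from rfl]
        have hw : List.replicate (k+j) false ++ List.replicate j true ++ (true :: w')
            = List.replicate (k+j) false ++ List.replicate (j+1) true ++ w' := by
          rw [List.append_assoc, htrue j, List.append_assoc]
        rw [hw]
        by_cases h2 : 2 ≤ k
        · have hiff := ih2 (k-1) (j+1) (by omega) (by omega)
          rw [show k - 1 + (j+1) = k + j from by omega] at hiff
          rw [decide_eq_true h2, Bool.true_and]
          exact hiff
        · have hk1 : k = 1 := by omega
          subst hk1
          simp only [decide_eq_true_eq, Bool.and_eq_true]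
          constructor
          · intro h; exact absurd h.1 (by omega)
          · intro hv
            exfalso
            exact not_valid_tight w' (1+j) (j+1) (by omega) (by omega) hv

lemma good_iff (w : List Bool) : good w = true ↔ isValid 1 1 w := by
  induction w with
  | nil => simpa [good] using valid_nil
  | cons c w' ih =>
    cases c with
    | true =>
      rw [show good (true :: w') = good w' from rfl, ih]
      exact (valid_cons_true w').symm
    | false =>
      rw [show good (false :: w') = chk 1 false w' from rfl]
      rw [(chk_iff w').1 1 le_rfl]
      rfl

/-! ### Counting -/

def allLists : ℕ → Finset (List Bool)
  | 0 => {[]}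
  | n+1 => ((allLists n).image (List.cons false)) ∪ ((allLists n).image (List.cons true))

lemma mem_allLists : ∀ (n : ℕ) (w : List Bool), w ∈ allLists n ↔ w.length = n := by
  intro n
  induction n with
  | zero =>
    intro w
    simp [allLists, List.length_eq_zero_iff]
  | succ n ih =>
    intro w
    cases w with
    | nil => simp [allLists]
    | cons c w' =>
      simp only [allLists, Finset.mem_union, Finset.mem_image, ih, List.length_cons,
        List.cons.injEq]
      cases c <;> simp

def cnt (P : List Bool → Bool) (n : ℕ) : ℕ :=
  ((allLists n).filter (fun w => P w = true)).card

lemma cnt_congr {P Q : List Bool → Bool} (h : ∀ w, P w = Q w) (n : ℕ) :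
    cnt P n = cnt Q n := by
  unfold cnt
  congr 1
  apply Finset.filter_congr
  intro w _
  rw [h]

lemma cnt_zero (P : List Bool → Bool) (h : P [] = true) : cnt P 0 = 1 := by
  unfold cnt
  rw [show allLists 0 = {[]} from rfl]
  rw [Finset.filter_singleton]
  simp [h]

lemma cnt_false (n : ℕ) : cnt (fun _ => false) n = 0 := by
  unfold cnt
  simp

lemma cnt_succ (P : List Bool → Bool) (n : ℕ) :
    cnt P (n+1) = cnt (fun w => P (false :: w)) n + cnt (fun w => P (true :: w)) n := by
  unfold cnt
  rw [show allLists (n+1) = ((allLists n).image (List.cons false))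
      ∪ ((allLists n).image (List.cons true)) from rfl]
  rw [Finset.filter_union]
  rw [Finset.card_union_of_disjoint]
  · rw [Finset.filter_image, Finset.filter_image,
      Finset.card_image_of_injective _ List.cons_injective,
      Finset.card_image_of_injective _ List.cons_injective]
  · refine Finset.disjoint_left.2 ?_
    intro w hw1 hw2
    rw [Finset.mem_filter, Finset.mem_image] at hw1 hw2
    obtain ⟨⟨u, _, rfl⟩, _⟩ := hw1
    obtain ⟨⟨v, _, hv⟩, _⟩ := hw2
    exact Bool.noConfusion (List.cons.injEq _ _ _ _ ▸ hv).1

lemma cnt_chk_false_succ (k n : ℕ) :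
    cnt (chk k false) (n+1)
      = cnt (chk (k+1) false) n
        + (if 2 ≤ k then cnt (chk (k-1) true) n else 0) := by
  rw [cnt_succ]
  have h1 : cnt (fun w => chk k false (false :: w)) n = cnt (chk (k+1) false) n :=
    cnt_congr (fun w => rfl) n
  have h2 : cnt (fun w => chk k false (true :: w)) n
      = (if 2 ≤ k then cnt (chk (k-1) true) n else 0) := by
    by_cases h2 : 2 ≤ k
    · rw [if_pos h2]
      exact cnt_congr (fun w => by
        show (decide (2 ≤ k) && chk (k-1) true w) = _
        rw [decide_eq_true h2, Bool.true_and]) n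
    · rw [if_neg h2]
      rw [cnt_congr (Q := fun _ => false) (fun w => by
        show (decide (2 ≤ k) && chk (k-1) true w) = false
        rw [decide_eq_false h2, Bool.false_and]) n]
      exact cnt_false n
  rw [h1, h2]

lemma cnt_chk_true_succ (k n : ℕ) (hk : 1 ≤ k) :
    cnt (chk k true) (n+1)
      = cnt (chk 1 false) n
        + (if 2 ≤ k then cnt (chk (k-1) true) n else 0) := by
  rw [cnt_succ]
  have h1 : cnt (fun w => chk k true (false :: w)) n = cnt (chk 1 false) n :=
    cnt_congr (fun w => rfl) n
  have h2 : cnt (fun w => chk k true (true :: w)) n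
      = (if 2 ≤ k then cnt (chk (k-1) true) n else 0) := by
    by_cases h2 : 2 ≤ k
    · rw [if_pos h2]
      exact cnt_congr (fun w => by
        show (decide (2 ≤ k) && chk (k-1) true w) = _
        rw [decide_eq_true h2, Bool.true_and]) n
    · rw [if_neg h2]
      rw [cnt_congr (Q := fun _ => false) (fun w => by
        show (decide (2 ≤ k) && chk (k-1) true w) = false
        rw [decide_eq_false h2, Bool.false_and]) n]
      exact cnt_false n
  rw [h1, h2]

lemma cnt_chk_formulas : ∀ n : ℕ,
    (∀ k, 1 ≤ k → cnt (chk k false) n + Nat.fib (max (n+3-k) 1) = Nat.fib (n+3)) ∧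
    (∀ k, 1 ≤ k → k ≤ n → cnt (chk k true) n + Nat.fib (n+2-k) = Nat.fib (n+2)) ∧
    (∀ k, n+1 ≤ k → cnt (chk k true) n = Nat.fib (n+2)) := by
  intro n
  induction n with
  | zero =>
    refine ⟨?_, ?_, ?_⟩
    · intro k hk
      rw [cnt_zero _ rfl, show (0:ℕ)+3 = 3 from by norm_num]
      have h3 : Nat.fib 3 = 2 := by
        simpa using Nat.fib_add_two (n := 1)
      have h12 : max (3-k) 1 = 1 ∨ max (3-k) 1 = 2 := by omega
      rcases h12 with h | h <;> rw [h]
      · rw [Nat.fib_one]; omega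
      · rw [Nat.fib_two]; omega
    · intro k hk hk0; omega
    · intro k hk
      rw [cnt_zero _ rfl]
      simp [Nat.fib_two]
  | succ n ih =>
    obtain ⟨ihB, ihC1, ihC2⟩ := ih
    have f4 : Nat.fib (n+4) = Nat.fib (n+2) + Nat.fib (n+3) := by
      simpa [show n+2+2 = n+4 from by omega, show n+2+1 = n+3 from by omega]
        using Nat.fib_add_two (n := n+2)
    have f3 : Nat.fib (n+3) = Nat.fib (n+1) + Nat.fib (n+2) := by
      simpa [show n+1+2 = n+3 from by omega, show n+1+1 = n+2 from by omega]
        using Nat.fib_add_two (n := n+1)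
    have f2 : Nat.fib (n+2) = Nat.fib n + Nat.fib (n+1) := Nat.fib_add_two
    refine ⟨?_, ?_, ?_⟩
    · intro k hk
      rw [cnt_chk_false_succ]
      rw [show n+1+3 = n+4 from by omega]
      by_cases h2 : 2 ≤ k
      · rw [if_pos h2]
        by_cases hkn : k ≤ n + 1
        · obtain ⟨m, hm1, hm2⟩ : ∃ m, k + m = n + 2 ∧ 1 ≤ m := ⟨n+2-k, by omega, by omega⟩
          have hB := ihB (k+1) (by omega)
          rw [show max (n+3-(k+1)) 1 = m from by omega] at hB
          have hC := ihC1 (k-1) (by omega) (by omega)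
          rw [show n+2-(k-1) = m+1 from by omega] at hC
          rw [show max (n+4-k) 1 = m+2 from by omega]
          have fm := Nat.fib_add_two (n := m)
          omega
        · have hB := ihB (k+1) (by omega)
          rw [show max (n+3-(k+1)) 1 = 1 from by omega] at hB
          have hC := ihC2 (k-1) (by omega)
          have e3 : Nat.fib (max (n+4-k) 1) = 1 := by
            have h12 : max (n+4-k) 1 = 1 ∨ max (n+4-k) 1 = 2 := by omega
            rcases h12 with h | h <;> rw [h]
            · exact Nat.fib_one
            · exact Nat.fib_two
          rw [e3]
          have hf1 : Nat.fib 1 = 1 := Nat.fib_one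
          omega
      · have hk1 : k = 1 := by omega
        subst hk1
        rw [if_neg h2]
        rw [show (1:ℕ)+1 = 2 from by norm_num]
        have hB := ihB 2 (by omega)
        rw [show max (n+3-2) 1 = n+1 from by omega] at hB
        rw [show max (n+4-1) 1 = n+3 from by omega]
        omega
    · intro k hk hkn
      rw [cnt_chk_true_succ _ _ hk]
      rw [show n+1+2 = n+3 from by omega]
      have hB1 := ihB 1 (by omega)
      rw [show max (n+3-1) 1 = n+2 from by omega] at hB1
      by_cases h2 : 2 ≤ k
      · rw [if_pos h2]
        have hC := ihC1 (k-1) (by omega) (by omega)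
        rw [show n+2-(k-1) = n+3-k from by omega] at hC
        omega
      · have hk1 : k = 1 := by omega
        subst hk1
        rw [if_neg h2]
        rw [show n+3-1 = n+2 from by omega]
        omega
    · intro k hk
      rw [cnt_chk_true_succ _ _ (by omega)]
      rw [show n+1+2 = n+3 from by omega]
      have hB1 := ihB 1 (by omega)
      rw [show max (n+3-1) 1 = n+2 from by omega] at hB1
      rw [if_pos (by omega : 2 ≤ k)]
      have hC := ihC2 (k-1) (by omega)
      omega

lemma cnt_good (n : ℕ) : cnt good n = Nat.fib (n+2) := by
  induction n with
  | zero => rw [cnt_zero _ rfl]; simp [Nat.fib_two]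
  | succ n ih =>
    rw [cnt_succ]
    rw [show n+1+2 = n+3 from by omega]
    have h1 : cnt (fun w => good (false :: w)) n = cnt (chk 1 false) n :=
      cnt_congr (fun w => rfl) n
    have h2 : cnt (fun w => good (true :: w)) n = cnt good n :=
      cnt_congr (fun w => rfl) n
    have hB := (cnt_chk_formulas n).1 1 le_rfl
    rw [show max (n+3-1) 1 = n+2 from by omega] at hB
    have f3 : Nat.fib (n+3) = Nat.fib (n+1) + Nat.fib (n+2) := by
      simpa [show n+1+2 = n+3 from by omega, show n+1+1 = n+2 from by omega]
        using Nat.fib_add_two (n := n+1)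
    rw [h1, h2, ih]
    omega

theorem stmt0 (n : ℕ) : wcount 1 1 n = Nat.fib (n + 2) := by
  rw [← cnt_good n]
  unfold wcount cnt
  have e : ∀ w : List Bool, (w.length = n ∧ isValid 1 1 w) ↔
      (w ∈ (allLists n).filter (fun w => good w = true)) := by
    intro w
    rw [Finset.mem_filter, mem_allLists n w, good_iff]
  rw [Nat.card_congr (Equiv.subtypeEquivRight e)]
  rw [Nat.card_eq_fintype_card]
  exact Fintype.card_coe _
end

section
/- For every natural number n, the number of binary words of length n such that every maximal factor of the form 0^a 1^b with a > 0 satisfies 2a > b equals the Tribonacci number T(n) where T satisfies T(n)=T(n-1)+T(n-2)+T(n-3) with T(0)=1, T(1)=2, T(2)=4. -/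
/-- Tribonacci numbers with T 0 = 1, T 1 = 2, T 2 = 4. -/
def trib : ℕ → ℕ
  | 0 => 1
  | 1 => 2
  | 2 => 4
  | n + 3 => trib (n + 2) + trib (n + 1) + trib n


namespace T21

def gR : List Bool → ℕ → ℕ → Prop
  | [], b, a => a = 0 ∨ b < 2 * a
  | true :: t, b, 0 => gR t (b+1) 0
  | true :: t, b, a+1 => b < 2 * (a+1) ∧ gR t 1 0
  | false :: t, b, a => gR t b (a+1)

@[simp] lemma gR_nil (b a : ℕ) : gR [] b a = (a = 0 ∨ b < 2*a) := rfl
@[simp] lemma gR_true0 (t : List Bool) (b : ℕ) : gR (true::t) b 0 = gR t (b+1) 0 := rfl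
@[simp] lemma gR_trueS (t : List Bool) (b a : ℕ) :
    gR (true::t) b (a+1) = (b < 2*(a+1) ∧ gR t 1 0) := rfl
@[simp] lemma gR_false (t : List Bool) (b a : ℕ) : gR (false::t) b a = gR t b (a+1) := rfl

lemma gR_mono : ∀ (t : List Bool) (a b b' : ℕ), b' ≤ b → gR t b a → gR t b' a := by
  intro t
  induction t with
  | nil =>
    intro a b b' h hg
    rcases hg with h0 | h1
    · exact Or.inl h0
    · exact Or.inr (lt_of_le_of_lt h h1)
  | cons x t ih =>
    intro a b b' h hg
    cases x with
    | false => exact ih (a+1) b b' h hg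
    | true =>
      cases a with
      | zero => exact ih 0 (b+1) (b'+1) (by omega) hg
      | succ a => exact ⟨lt_of_le_of_lt h hg.1, hg.2⟩

lemma gR_zero : ∀ (t : List Bool) (a : ℕ), gR t 0 a ↔ gR t 0 0 := by
  intro t
  induction t with
  | nil => intro a; simp; omega
  | cons x t ih =>
    intro a
    cases x with
    | false => simp only [gR_false]; rw [ih (a+1), ih 1]
    | true =>
      cases a with
      | zero => rfl
      | succ a =>
        simp only [gR_trueS, gR_true0]
        constructor
        · exact fun h => h.2
        · exact fun h => ⟨by omega, h⟩

lemma gR_rep_true : ∀ (c : ℕ) (t : List Bool) (b : ℕ),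
    gR (List.replicate c true ++ t) b 0 ↔ gR t (b + c) 0 := by
  intro c
  induction c with
  | zero => intro t b; simp
  | succ c ih =>
    intro t b
    rw [List.replicate_succ, List.cons_append, gR_true0, ih t (b+1),
      show b+1+c = b + (c+1) from by omega]

lemma gR_rep_false : ∀ (a : ℕ) (t : List Bool) (b a0 : ℕ),
    gR (List.replicate a false ++ t) b a0 ↔ gR t b (a0 + a) := by
  intro a
  induction a with
  | zero => intro t b a0; simp
  | succ a ih =>
    intro t b a0
    rw [List.replicate_succ, List.cons_append, gR_false, ih t b (a0+1),
      show a0+1+a = a0 + (a+1) from by omega]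

lemma gR_block {b a : ℕ} {v : List Bool} (ha : 1 ≤ a)
    (hv : v = [] ∨ v.head? = some true) :
    gR (List.replicate b true ++ (List.replicate a false ++ v)) 0 0 ↔
      (b < 2 * a ∧ gR v 0 0) := by
  rw [gR_rep_true, gR_rep_false]
  rcases hv with rfl | hv
  · simp; omega
  · rcases v with _ | ⟨x, v⟩
    · simp at hv
    · simp only [List.head?_cons, Option.some_inj] at hv
      subst hv
      rcases a with _ | a
      · omega
      · simp

lemma gR_all_true (n : ℕ) : gR (List.replicate n true) 0 0 := by
  have := (gR_rep_true n [] 0).mpr (by simp)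
  simpa using this

end T21
namespace T21

/-- existence of a bad maximal block, witnessing invalidity (on reversed words) -/
def Bad (r : List Bool) : Prop :=
  ∃ u c d v, r = u ++ List.replicate c true ++ List.replicate d false ++ v ∧
    (u = [] ∨ u.getLast? = some false) ∧ (v = [] ∨ v.head? = some true) ∧
    0 < d ∧ 2 * d ≤ c

lemma bad_of_not_gR : ∀ (r : List Bool) (b a : ℕ), ¬ gR r b a →
    ∃ u c d v,
      List.replicate b true ++ List.replicate a false ++ r
        = u ++ List.replicate c true ++ List.replicate d false ++ v ∧
      (u = [] ∨ u.getLast? = some false) ∧ (v = [] ∨ v.head? = some true) ∧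
      0 < d ∧ 2 * d ≤ c := by
  intro r
  induction r with
  | nil =>
    intro b a h
    simp only [gR_nil] at h
    push_neg at h
    exact ⟨[], b, a, [], by simp, Or.inl rfl, Or.inl rfl, by omega, h.2⟩
  | cons x t ih =>
    intro b a h
    cases x with
    | false =>
      rw [gR_false] at h
      obtain ⟨u, c, d, v, heq, hu, hv, hd, hc⟩ := ih b (a+1) h
      refine ⟨u, c, d, v, ?_, hu, hv, hd, hc⟩
      rw [← heq, List.replicate_succ' (n := a) (a := false)]
      simp
    | true =>
      cases a with
      | zero =>
        rw [gR_true0] at h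
        obtain ⟨u, c, d, v, heq, hu, hv, hd, hc⟩ := ih (b+1) 0 h
        refine ⟨u, c, d, v, ?_, hu, hv, hd, hc⟩
        rw [← heq, List.replicate_succ' (n := b) (a := true)]
        simp
      | succ a =>
        rw [gR_trueS] at h
        by_cases hb : b < 2 * (a+1)
        · have h2 : ¬ gR t 1 0 := fun hg => h ⟨hb, hg⟩
          obtain ⟨u, c, d, v, heq, hu, hv, hd, hc⟩ := ih 1 0 h2
          refine ⟨List.replicate b true ++ List.replicate (a+1) false ++ u, c, d, v, ?_, ?_, hv, hd, hc⟩
          · have : (true :: t : List Bool) = List.replicate 1 true ++ List.replicate 0 false ++ t := by simp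
            rw [this, heq]
            simp
          · right
            rcases u with _ | ⟨y, u⟩
            · rw [List.append_nil, List.getLast?_append_of_ne_nil _ (by simp [List.replicate_succ])]
              simp [List.replicate_succ' (n := a) (a := false)]
            · rw [List.getLast?_append_of_ne_nil _ (by simp)]
              rcases hu with h0 | h1
              · exact absurd h0 (by simp)
              · exact h1
        · exact ⟨[], b, a+1, true :: t, by simp, Or.inl rfl, Or.inr rfl, by omega, by omega⟩

lemma not_gR_of_bad : ∀ (u r : List Bool) (c d : ℕ) (v : List Bool),
    r = u ++ List.replicate c true ++ List.replicate d false ++ v →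
    (u = [] ∨ u.getLast? = some false) → (v = [] ∨ v.head? = some true) →
    0 < d → 2 * d ≤ c → ¬ gR r 0 0 := by
  intro u
  induction u with
  | nil =>
    intro r c d v heq _ hv hd hc hg
    rw [heq] at hg
    simp only [List.nil_append, ← List.append_assoc] at hg
    rw [List.append_assoc, gR_block hd hv] at hg
    omega
  | cons x u ih =>
    intro r c d v heq hu hv hd hc hg
    rcases u with _ | ⟨y, u'⟩
    · -- u = [x]; then x = false
      have hx : x = false := by
        rcases hu with h0 | h1
        · exact absurd h0 (by simp)
        · simpa using h1
      subst hx
      subst heq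
      rw [List.cons_append, List.cons_append, List.cons_append, gR_false, gR_zero] at hg
      exact ih _ c d v rfl (Or.inl rfl) hv hd hc hg
    · have hu' : (y :: u' : List Bool) = [] ∨ (y :: u').getLast? = some false := by
        rcases hu with h0 | h1
        · exact absurd h0 (by simp)
        · right; rw [← h1, List.getLast?_cons_cons]
      subst heq
      cases x with
      | false =>
        rw [List.cons_append, List.cons_append, List.cons_append, gR_false, gR_zero] at hg
        exact ih _ c d v rfl hu' hv hd hc hg
      | true =>
        rw [List.cons_append, List.cons_append, List.cons_append, gR_true0] at hg
        have := gR_mono _ 0 1 0 (by omega) hg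
        exact ih _ c d v rfl hu' hv hd hc this

lemma isValid_iff (w : List Bool) : isValid 2 1 w ↔ gR w.reverse 0 0 := by
  constructor
  · intro hval
    by_contra hg
    obtain ⟨u, c, d, v, heq, hu, hv, hd, hc⟩ := bad_of_not_gR w.reverse 0 0 hg
    simp only [List.replicate_zero, List.nil_append] at heq
    have hw : w = v.reverse ++ List.replicate d false ++ List.replicate c true ++ u.reverse := by
      have := congrArg List.reverse heq
      simpa [List.reverse_append, List.reverse_replicate, List.append_assoc] using this
    have := hval v.reverse u.reverse d c (by simpa [List.append_assoc] using hw)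
      (by rcases hv with h | h
          · exact Or.inl (by simp [h])
          · exact Or.inr (by rwa [List.getLast?_reverse]))
      (by rcases hu with h | h
          · exact Or.inl (by simp [h])
          · exact Or.inr (by rwa [List.head?_reverse]))
      hd
    omega
  · intro hg p s a b heq hp hs ha
    by_contra hlt
    have hball : 2 * a ≤ b := by omega
    refine not_gR_of_bad s.reverse w.reverse b a p.reverse ?_ ?_ ?_ ha hball hg
    · rw [heq]
      simp [List.reverse_append, List.reverse_replicate, List.append_assoc]
    · rcases hs with h | h
      · exact Or.inl (by simp [h])
      · exact Or.inr (by rwa [List.getLast?_reverse])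
    · rcases hp with h | h
      · exact Or.inl (by simp [h])
      · exact Or.inr (by rwa [List.head?_reverse])

end T21
namespace T21

abbrev Fs (n : ℕ) := {r : List Bool // r.length = n ∧ gR r 0 0}
abbrev Ss (n : ℕ) := {r : List Bool // r.length = n ∧ gR r 0 0 ∧ r.head? = some true}
abbrev Ts (n : ℕ) := {r : List Bool // r.length = n ∧ gR r 0 0 ∧ (r = [] ∨ r.head? = some true)}
abbrev Blk (n : ℕ) := {x : ℕ × ℕ × List Bool //
  1 ≤ x.1 ∧ 1 ≤ x.2.1 ∧ x.1 < 2 * x.2.1 ∧ (x.2.2 = [] ∨ x.2.2.head? = some true) ∧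
  gR x.2.2 0 0 ∧ x.1 + x.2.1 + x.2.2.length = n}
abbrev Blk1 (n : ℕ) := {x : Blk n // x.1.1 = 1}
abbrev Blk2 (n : ℕ) := {x : Blk n // x.1.1 = 2}
abbrev Blk3 (n : ℕ) := {x : Blk n // 3 ≤ x.1.1}

/-! ### uniqueness of run decompositions -/

lemma rep_false_inj : ∀ (a a' : ℕ) (v v' : List Bool),
    (v = [] ∨ v.head? = some true) → (v' = [] ∨ v'.head? = some true) →
    List.replicate a false ++ v = List.replicate a' false ++ v' → a = a' ∧ v = v' := by
  intro a
  induction a with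
  | zero =>
    intro a' v v' hv hv' h
    cases a' with
    | zero => simpa using h
    | succ a' =>
      exfalso
      simp only [List.replicate_zero, List.nil_append, List.replicate_succ,
        List.cons_append] at h
      rcases hv with rfl | hv
      · simp at h
      · rw [h] at hv; simp at hv
  | succ a ih =>
    intro a' v v' hv hv' h
    cases a' with
    | zero =>
      exfalso
      simp only [List.replicate_zero, List.nil_append, List.replicate_succ,
        List.cons_append] at h
      rcases hv' with rfl | hv'
      · simp at h
      · rw [← h] at hv'; simp at hv'
    | succ a' =>
      simp only [List.replicate_succ, List.cons_append, List.cons.injEq, true_and] at h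
      obtain ⟨h1, h2⟩ := ih a' v v' hv hv' h
      exact ⟨by omega, h2⟩

lemma rep_true_inj : ∀ (b b' : ℕ) (x x' : List Bool),
    x.head? = some false → x'.head? = some false →
    List.replicate b true ++ x = List.replicate b' true ++ x' → b = b' ∧ x = x' := by
  intro b
  induction b with
  | zero =>
    intro b' x x' hx hx' h
    cases b' with
    | zero => simpa using h
    | succ b' =>
      exfalso
      simp only [List.replicate_zero, List.nil_append, List.replicate_succ,
        List.cons_append] at h
      rw [h] at hx; simp at hx
  | succ b ih =>
    intro b' x x' hx hx' h
    cases b' with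
    | zero =>
      exfalso
      simp only [List.replicate_zero, List.nil_append, List.replicate_succ,
        List.cons_append] at h
      rw [← h] at hx'; simp at hx'
    | succ b' =>
      simp only [List.replicate_succ, List.cons_append, List.cons.injEq, true_and] at h
      obtain ⟨h1, h2⟩ := ih b' x x' hx hx' h
      exact ⟨by omega, h2⟩

lemma head?_rep_false_append (a : ℕ) (ha : 1 ≤ a) (v : List Bool) :
    (List.replicate a false ++ v).head? = some false := by
  cases a with
  | zero => omega
  | succ a => simp [List.replicate_succ]

lemma block_inj {b a b' a' : ℕ} {v v' : List Bool}
    (ha : 1 ≤ a) (ha' : 1 ≤ a')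
    (hv : v = [] ∨ v.head? = some true) (hv' : v' = [] ∨ v'.head? = some true)
    (h : List.replicate b true ++ (List.replicate a false ++ v)
       = List.replicate b' true ++ (List.replicate a' false ++ v')) :
    b = b' ∧ a = a' ∧ v = v' := by
  obtain ⟨h1, h2⟩ := rep_true_inj b b' _ _
    (head?_rep_false_append a ha v) (head?_rep_false_append a' ha' v') h
  obtain ⟨h3, h4⟩ := rep_false_inj a a' v v' hv hv' h2
  exact ⟨h1, h3, h4⟩

lemma block_ne_all_true {b a : ℕ} {v : List Bool} (ha : 1 ≤ a) (m : ℕ) :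
    List.replicate b true ++ (List.replicate a false ++ v) ≠ List.replicate m true := by
  intro h
  have hmem : false ∈ List.replicate m true := by
    rw [← h]
    refine List.mem_append.mpr (Or.inr (List.mem_append.mpr (Or.inl ?_)))
    exact List.mem_replicate.mpr ⟨by omega, rfl⟩
  simp [List.mem_replicate] at hmem

/-! ### existence of run decompositions -/

lemma exists_false_run : ∀ (t : List Bool), t.head? = some false →
    ∃ a v, 1 ≤ a ∧ (v = [] ∨ v.head? = some true) ∧ t = List.replicate a false ++ v := by
  intro t
  induction t with
  | nil => intro h; simp at h
  | cons x t ih =>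
    intro h
    simp only [List.head?_cons, Option.some_inj] at h
    subst h
    match t, ih with
    | [], _ => exact ⟨1, [], le_refl 1, Or.inl rfl, by simp⟩
    | true :: t', _ => exact ⟨1, true :: t', le_refl 1, Or.inr rfl, by simp⟩
    | false :: t', ih =>
      obtain ⟨a, v, ha, hv, heq⟩ := ih rfl
      exact ⟨a + 1, v, by omega, hv, by rw [List.replicate_succ, List.cons_append, ← heq]⟩

lemma exists_decomp : ∀ (r : List Bool), r.head? = some true →
    r = List.replicate r.length true ∨
    ∃ b a v, 1 ≤ b ∧ 1 ≤ a ∧ (v = [] ∨ v.head? = some true) ∧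
      r = List.replicate b true ++ (List.replicate a false ++ v) := by
  intro r
  induction r with
  | nil => intro h; simp at h
  | cons x t ih =>
    intro h
    simp only [List.head?_cons, Option.some_inj] at h
    subst h
    match t, ih with
    | [], _ => left; simp
    | true :: t', ih =>
      rcases ih rfl with h1 | ⟨b, a, v, hb, ha, hv, heq⟩
      · left
        simp only [List.length_cons]
        rw [List.replicate_succ]
        exact congrArg (true :: ·) h1
      · right
        exact ⟨b + 1, a, v, by omega, ha, hv, by
          rw [List.replicate_succ, List.cons_append, ← heq]⟩
    | false :: t', _ =>
      right
      obtain ⟨a, v, ha, hv, heq⟩ := exists_false_run (false :: t') rfl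
      exact ⟨1, a, v, le_refl 1, ha, hv, by
        simp only [List.replicate_one, List.singleton_append]
        rw [← heq]⟩

/-! ### finiteness -/

instance listFin (n : ℕ) : Finite {l : List Bool // l.length = n} :=
  inferInstanceAs (Finite (List.Vector Bool n))

instance (n : ℕ) : Finite (Fs n) :=
  Finite.of_injective (fun x => (⟨x.1, x.2.1⟩ : {l : List Bool // l.length = n}))
    (fun x y h => Subtype.ext (congrArg Subtype.val h : _))

instance (n : ℕ) : Finite (Ss n) :=
  Finite.of_injective (fun x => (⟨x.1, x.2.1⟩ : {l : List Bool // l.length = n}))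
    (fun x y h => Subtype.ext (congrArg Subtype.val h : _))

instance (n : ℕ) : Finite (Ts n) :=
  Finite.of_injective (fun x => (⟨x.1, x.2.1⟩ : {l : List Bool // l.length = n}))
    (fun x y h => Subtype.ext (congrArg Subtype.val h : _))

instance (n : ℕ) : Finite (Blk n) := by
  refine Finite.of_injective (fun x =>
    (⟨List.replicate x.1.1 true ++ (List.replicate x.1.2.1 false ++ x.1.2.2), ?_⟩ :
      {l : List Bool // l.length = n})) ?_
  · obtain ⟨⟨b, a, v⟩, hb, ha, hba, hv, hgv, hlen⟩ := x
    show (List.replicate b true ++ (List.replicate a false ++ v)).length = n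
    dsimp only at hlen
    simp only [List.length_append, List.length_replicate]
    omega
  · rintro ⟨⟨b, a, v⟩, hb, ha, hba, hv, hgv, hlen⟩ ⟨⟨b', a', v'⟩, hb', ha', hba', hv', hgv', hlen'⟩ h
    simp only [Subtype.mk.injEq] at h
    obtain ⟨h1, h2, h3⟩ := block_inj ha ha' hv hv' h
    subst h1; subst h2; subst h3
    rfl

instance (n : ℕ) : Finite (Blk1 n) := Subtype.finite
instance (n : ℕ) : Finite (Blk2 n) := Subtype.finite
instance (n : ℕ) : Finite (Blk3 n) := Subtype.finite

end T21
namespace T21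

/-! ### the equivalences -/

/-- split off a leading `false` -/
noncomputable def e3 (n : ℕ) : Fs n ⊕ Ss (n+1) ≃ Fs (n+1) := by
  refine Equiv.ofBijective (fun x => match x with
    | Sum.inl t => ⟨false :: t.1, by simp [t.2.1], by
        rw [gR_false, gR_zero]; exact t.2.2⟩
    | Sum.inr s => ⟨s.1, s.2.1, s.2.2.1⟩) ⟨?_, ?_⟩
  · rintro (t | s) (t' | s') h
    · simp only [Subtype.mk.injEq, List.cons.injEq, true_and] at h
      exact congrArg Sum.inl (Subtype.ext h)
    · exfalso
      simp only [Subtype.mk.injEq] at h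
      have := s'.2.2.2
      rw [← h] at this; simp at this
    · exfalso
      simp only [Subtype.mk.injEq] at h
      have := s.2.2.2
      rw [h] at this; simp at this
    · simp only [Subtype.mk.injEq] at h
      exact congrArg Sum.inr (Subtype.ext h)
  · rintro ⟨r, hlen, hg⟩
    rcases r with _ | ⟨x, t⟩
    · simp at hlen
    · cases x
      · exact ⟨Sum.inl ⟨t, by simpa using hlen, (gR_zero t 1).mp (by rwa [gR_false] at hg)⟩, rfl⟩
      · exact ⟨Sum.inr ⟨true :: t, hlen, hg, rfl⟩, rfl⟩

def wordOf (y : ℕ × ℕ × List Bool) : List Bool :=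
  List.replicate y.1 true ++ (List.replicate y.2.1 false ++ y.2.2)

lemma wordOf_spec (n : ℕ) (y : ℕ × ℕ × List Bool)
    (hy : 1 ≤ y.1 ∧ 1 ≤ y.2.1 ∧ y.1 < 2 * y.2.1 ∧ (y.2.2 = [] ∨ y.2.2.head? = some true) ∧
      gR y.2.2 0 0 ∧ y.1 + y.2.1 + y.2.2.length = n) :
    (wordOf y).length = n ∧ gR (wordOf y) 0 0 ∧ (wordOf y).head? = some true := by
  obtain ⟨b, a, v⟩ := y
  obtain ⟨hb, ha, hba, hv, hgv, hlen⟩ := hy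
  try dsimp only at hb ha hba hv hgv hlen
  simp only [wordOf]
  refine ⟨by simp; omega, (gR_block ha hv).mpr ⟨hba, hgv⟩, ?_⟩
  cases b with
  | zero => omega
  | succ b => simp [List.replicate_succ]

/-- all-ones or a first block -/
noncomputable def e4 (n : ℕ) : PUnit.{1} ⊕ Blk (n+1) ≃ Ss (n+1) := by
  refine Equiv.ofBijective (fun x => match x with
    | Sum.inl _ => ⟨List.replicate (n+1) true, by simp, gR_all_true _,
        by simp [List.replicate_succ]⟩
    | Sum.inr y => ⟨wordOf y.1, wordOf_spec (n+1) y.1 y.2⟩) ⟨?_, ?_⟩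
  · rintro (⟨⟩ | y) (⟨⟩ | y') h
    · rfl
    · exfalso
      obtain ⟨⟨b, a, v⟩, hb, ha, hba, hv, hgv, hlen⟩ := y'
      try dsimp only at hb ha hba hv hgv hlen
      have hval := congrArg Subtype.val h
      simp only [wordOf] at hval
      try dsimp only at hval
      exact block_ne_all_true ha (n+1) hval.symm
    · exfalso
      obtain ⟨⟨b, a, v⟩, hb, ha, hba, hv, hgv, hlen⟩ := y
      try dsimp only at hb ha hba hv hgv hlen
      have hval := congrArg Subtype.val h
      simp only [wordOf] at hval
      try dsimp only at hval
      exact block_ne_all_true ha (n+1) hval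
    · obtain ⟨⟨b, a, v⟩, hb, ha, hba, hv, hgv, hlen⟩ := y
      obtain ⟨⟨b', a', v'⟩, hb', ha', hba', hv', hgv', hlen'⟩ := y'
      try dsimp only at hb ha hba hv hgv hlen hb' ha' hba' hv' hgv' hlen'
      have hval := congrArg Subtype.val h
      simp only [wordOf] at hval
      try dsimp only at hval
      obtain ⟨rfl, rfl, rfl⟩ := block_inj ha ha' hv hv' hval
      rfl
  · rintro ⟨r, hlen, hg, hh⟩
    rcases exists_decomp r hh with h1 | ⟨b, a, v, hb, ha, hv, heq⟩
    · refine ⟨Sum.inl PUnit.unit, Subtype.ext ?_⟩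
      show List.replicate (n+1) true = r
      rw [← hlen]; exact h1.symm
    · have hblk : b < 2 * a ∧ gR v 0 0 := by
        rw [heq, gR_block ha hv] at hg; exact hg
      have hlen' : b + a + v.length = n + 1 := by
        rw [heq] at hlen; simp only [List.length_append, List.length_replicate] at hlen; omega
      refine ⟨Sum.inr ⟨(b, a, v), hb, ha, hblk.1, hv, hblk.2, hlen'⟩, Subtype.ext ?_⟩
      show wordOf (b, a, v) = r
      rw [heq]; rfl

/-- classification of blocks by the size of the one-run -/
noncomputable def e5 (n : ℕ) : Blk1 n ⊕ Blk2 n ⊕ Blk3 n ≃ Blk n := by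
  refine Equiv.ofBijective (fun x => match x with
    | Sum.inl y => y.1
    | Sum.inr (Sum.inl y) => y.1
    | Sum.inr (Sum.inr y) => y.1) ⟨?_, ?_⟩
  · rintro (y | y | y) (y' | y' | y') h <;> try dsimp only at h
    · exact congrArg Sum.inl (Subtype.ext h)
    · exfalso; have h1 := y.2; have h2 := y'.2; rw [h] at h1; omega
    · exfalso; have h1 := y.2; have h2 := y'.2; rw [h] at h1; omega
    · exfalso; have h1 := y.2; have h2 := y'.2; rw [h] at h1; omega
    · exact congrArg (Sum.inr ∘ Sum.inl) (Subtype.ext h)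
    · exfalso; have h1 := y.2; have h2 := y'.2; rw [h] at h1; omega
    · exfalso; have h1 := y.2; have h2 := y'.2; rw [h] at h1; omega
    · exfalso; have h1 := y.2; have h2 := y'.2; rw [h] at h1; omega
    · exact congrArg (Sum.inr ∘ Sum.inr) (Subtype.ext h)
  · intro x
    by_cases h1 : x.1.1 = 1
    · exact ⟨Sum.inl ⟨x, h1⟩, rfl⟩
    · by_cases h2 : x.1.1 = 2
      · exact ⟨Sum.inr (Sum.inl ⟨x, h2⟩), rfl⟩
      · have := x.2.1
        exact ⟨Sum.inr (Sum.inr ⟨x, by omega⟩), rfl⟩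

/-- `b = 2` blocks at `n+2` are `b = 1` blocks at `n` with one more zero -/
noncomputable def e6 (n : ℕ) : Blk1 n ≃ Blk2 (n+2) := by
  refine Equiv.ofBijective (fun y => ⟨⟨(2, y.1.1.2.1 + 1, y.1.1.2.2), ?_⟩, rfl⟩) ⟨?_, ?_⟩
  · obtain ⟨⟨⟨b, a, v⟩, hb, ha, hba, hv, hgv, hlen⟩, h1⟩ := y
    try dsimp only at hb ha hba hv hgv hlen h1 ⊢
    exact ⟨by omega, by omega, by omega, hv, hgv, by omega⟩
  · rintro ⟨⟨⟨b, a, v⟩, hy⟩, h1⟩ ⟨⟨⟨b', a', v'⟩, hy'⟩, h1'⟩ h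
    try dsimp only at h1 h1'
    have hval := congrArg (fun z => z.1.1) h
    simp only [Prod.mk.injEq] at hval
    try dsimp only at hval
    refine Subtype.ext (Subtype.ext ?_)
    show (b, a, v) = (b', a', v')
    simp only [Prod.mk.injEq]
    exact ⟨by omega, by omega, hval.2.2⟩
  · rintro ⟨⟨⟨b, a, v⟩, hb, ha, hba, hv, hgv, hlen⟩, h2⟩
    try dsimp only at hb ha hba hv hgv hlen h2
    have hprop : 1 ≤ 1 ∧ 1 ≤ a - 1 ∧ 1 < 2 * (a - 1) ∧ (v = [] ∨ v.head? = some true) ∧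
        gR v 0 0 ∧ 1 + (a - 1) + v.length = n :=
      ⟨le_refl 1, by omega, by omega, hv, hgv, by omega⟩
    refine ⟨⟨⟨(1, a - 1, v), hprop⟩, rfl⟩, Subtype.ext (Subtype.ext ?_)⟩
    show (2, a - 1 + 1, v) = (b, a, v)
    rw [show a - 1 + 1 = a from by omega, h2]

/-- `b ≥ 3` blocks at `n+3` are blocks at `n` grown by `110` -/
noncomputable def e7 (n : ℕ) : Blk n ≃ Blk3 (n+3) := by
  refine Equiv.ofBijective (fun y => ⟨⟨(y.1.1 + 2, y.1.2.1 + 1, y.1.2.2), ?_⟩, ?_⟩) ⟨?_, ?_⟩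
  · obtain ⟨⟨b, a, v⟩, hb, ha, hba, hv, hgv, hlen⟩ := y
    try dsimp only at hb ha hba hv hgv hlen ⊢
    exact ⟨by omega, by omega, by omega, hv, hgv, by omega⟩
  · obtain ⟨⟨b, a, v⟩, hb, ha, hba, hv, hgv, hlen⟩ := y
    show 3 ≤ (b, a, v).1 + 2
    try dsimp only at hb ⊢
    omega
  · rintro ⟨⟨b, a, v⟩, hy⟩ ⟨⟨b', a', v'⟩, hy'⟩ h
    have hval := congrArg (fun z => z.1.1) h
    simp only [Prod.mk.injEq] at hval
    try dsimp only at hval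
    refine Subtype.ext ?_
    show (b, a, v) = (b', a', v')
    simp only [Prod.mk.injEq]
    exact ⟨by omega, by omega, hval.2.2⟩
  · rintro ⟨⟨⟨b, a, v⟩, hb, ha, hba, hv, hgv, hlen⟩, h3⟩
    try dsimp only at hb ha hba hv hgv hlen h3
    have hprop : 1 ≤ b - 2 ∧ 1 ≤ a - 1 ∧ b - 2 < 2 * (a - 1) ∧ (v = [] ∨ v.head? = some true) ∧
        gR v 0 0 ∧ (b - 2) + (a - 1) + v.length = n :=
      ⟨by omega, by omega, by omega, hv, hgv, by omega⟩
    refine ⟨⟨(b - 2, a - 1, v), hprop⟩, Subtype.ext (Subtype.ext ?_)⟩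
    show (b - 2 + 2, a - 1 + 1, v) = (b, a, v)
    rw [show b - 2 + 2 = b from by omega, show a - 1 + 1 = a from by omega]

/-- recursion for `b = 1` blocks -/
noncomputable def e8 (n : ℕ) : Blk1 (n+1) ⊕ Ts n ≃ Blk1 (n+2) := by
  refine Equiv.ofBijective (fun x => match x with
    | Sum.inl y => ⟨⟨(1, y.1.1.2.1 + 1, y.1.1.2.2), ?_⟩, rfl⟩
    | Sum.inr v => ⟨⟨(1, 1, v.1), ?_⟩, rfl⟩) ⟨?_, ?_⟩
  · obtain ⟨⟨⟨b, a, w⟩, hb, ha, hba, hv, hgv, hlen⟩, h1⟩ := y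
    try dsimp only at hb ha hba hv hgv hlen h1 ⊢
    exact ⟨le_refl 1, by omega, by omega, hv, hgv, by omega⟩
  · obtain ⟨w, hlen, hgw, hw⟩ := v
    try dsimp only at hlen ⊢
    exact ⟨le_refl 1, le_refl 1, by omega, hw, hgw, by omega⟩
  · rintro (y | v) (y' | v') h <;> try dsimp only at h
    · obtain ⟨⟨⟨b, a, w⟩, hy⟩, h1⟩ := y
      obtain ⟨⟨⟨b', a', w'⟩, hy'⟩, h1'⟩ := y'
      have hval := congrArg (fun z => z.1.1) h
      simp only [Prod.mk.injEq] at hval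
      try dsimp only at hval h1 h1'
      refine congrArg Sum.inl (Subtype.ext (Subtype.ext ?_))
      show (b, a, w) = (b', a', w')
      simp only [Prod.mk.injEq]
      exact ⟨by omega, by omega, hval.2.2⟩
    · exfalso
      obtain ⟨⟨⟨b, a, w⟩, hb, ha, hba, hv, hgv, hlen⟩, h1⟩ := y
      have hval := congrArg (fun z => z.1.1) h
      simp only [Prod.mk.injEq] at hval
      try dsimp only at hval ha
      omega
    · exfalso
      obtain ⟨⟨⟨b', a', w'⟩, hb', ha', hba', hv', hgv', hlen'⟩, h1'⟩ := y'
      have hval := congrArg (fun z => z.1.1) h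
      simp only [Prod.mk.injEq] at hval
      try dsimp only at hval ha'
      omega
    · have hval := congrArg (fun z => z.1.1) h
      simp only [Prod.mk.injEq] at hval
      try dsimp only at hval
      exact congrArg Sum.inr (Subtype.ext hval.2.2)
  · rintro ⟨⟨⟨b, a, v⟩, hb, ha, hba, hv, hgv, hlen⟩, h1⟩
    try dsimp only at hb ha hba hv hgv hlen h1
    rcases Nat.lt_or_ge a 2 with h2 | h2
    · have ha1 : a = 1 := by omega
      refine ⟨Sum.inr ⟨v, by omega, hgv, hv⟩, Subtype.ext (Subtype.ext ?_)⟩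
      show (1, 1, v) = (b, a, v)
      rw [h1, ha1]
    · have hprop : 1 ≤ 1 ∧ 1 ≤ a - 1 ∧ 1 < 2 * (a - 1) ∧ (v = [] ∨ v.head? = some true) ∧
          gR v 0 0 ∧ 1 + (a - 1) + v.length = n + 1 :=
        ⟨le_refl 1, by omega, by omega, hv, hgv, by omega⟩
      refine ⟨Sum.inl ⟨⟨(1, a - 1, v), hprop⟩, rfl⟩, Subtype.ext (Subtype.ext ?_)⟩
      show (1, a - 1 + 1, v) = (b, a, v)
      rw [show a - 1 + 1 = a from by omega, h1]

/-- for positive length, the `Ts` and `Ss` conditions agree -/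
noncomputable def e9 (n : ℕ) : Ts (n+1) ≃ Ss (n+1) := by
  refine Equiv.subtypeEquivRight ?_
  intro r
  constructor
  · rintro ⟨h1, h2, (rfl | h3)⟩
    · simp at h1
    · exact ⟨h1, h2, h3⟩
  · rintro ⟨h1, h2, h3⟩
    exact ⟨h1, h2, Or.inr h3⟩

end T21
namespace T21

/-! ### cardinalities -/

lemma cF0 : Nat.card (Fs 0) = 1 := by
  have : Unique (Fs 0) := {
    default := ⟨[], rfl, by simp⟩
    uniq := by rintro ⟨r, hlen, hg⟩; exact Subtype.ext (List.length_eq_zero_iff.mp hlen) }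
  exact Nat.card_unique

lemma cT0 : Nat.card (Ts 0) = 1 := by
  have : Unique (Ts 0) := {
    default := ⟨[], rfl, by simp, Or.inl rfl⟩
    uniq := by rintro ⟨r, hlen, hg, hh⟩; exact Subtype.ext (List.length_eq_zero_iff.mp hlen) }
  exact Nat.card_unique

instance : IsEmpty (Blk 0) :=
  ⟨fun x => by
    obtain ⟨⟨b, a, v⟩, hb, ha, _, _, _, hlen⟩ := x
    try dsimp only at hb ha hlen
    omega⟩

instance : IsEmpty (Blk 1) :=
  ⟨fun x => by
    obtain ⟨⟨b, a, v⟩, hb, ha, _, _, _, hlen⟩ := x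
    try dsimp only at hb ha hlen
    omega⟩

instance : IsEmpty (Blk1 0) := ⟨fun x => isEmptyElim x.1⟩
instance : IsEmpty (Blk1 1) := ⟨fun x => isEmptyElim x.1⟩
instance : IsEmpty (Blk2 1) := ⟨fun x => isEmptyElim x.1⟩
instance : IsEmpty (Blk3 1) := ⟨fun x => isEmptyElim x.1⟩

instance : IsEmpty (Blk3 2) :=
  ⟨fun x => by
    obtain ⟨⟨⟨b, a, v⟩, hb, ha, hba, _, _, hlen⟩, h3⟩ := x
    try dsimp only at hb ha hba hlen h3
    omega⟩

lemma cF (n : ℕ) : Nat.card (Fs (n+1)) = Nat.card (Fs n) + Nat.card (Ss (n+1)) := by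
  rw [← Nat.card_congr (e3 n), Nat.card_sum]

lemma cS (n : ℕ) : Nat.card (Ss (n+1)) = 1 + Nat.card (Blk (n+1)) := by
  rw [← Nat.card_congr (e4 n), Nat.card_sum, Nat.card_unique]

lemma cT (n : ℕ) : Nat.card (Ts (n+1)) = Nat.card (Ss (n+1)) := Nat.card_congr (e9 n)

lemma cK (n : ℕ) :
    Nat.card (Blk n) = Nat.card (Blk1 n) + (Nat.card (Blk2 n) + Nat.card (Blk3 n)) := by
  rw [← Nat.card_congr (e5 n), Nat.card_sum, Nat.card_sum]

lemma cK2 (n : ℕ) : Nat.card (Blk2 (n+2)) = Nat.card (Blk1 n) := (Nat.card_congr (e6 n)).symm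

lemma cK3 (n : ℕ) : Nat.card (Blk3 (n+3)) = Nat.card (Blk n) := (Nat.card_congr (e7 n)).symm

lemma cK1 (n : ℕ) :
    Nat.card (Blk1 (n+2)) = Nat.card (Blk1 (n+1)) + Nat.card (Ts n) := by
  rw [← Nat.card_congr (e8 n), Nat.card_sum]

/-! ### the tribonacci computation -/

lemma trib3 (m : ℕ) : trib (m+3) = trib (m+2) + trib (m+1) + trib m := rfl

lemma main : ∀ n : ℕ, Nat.card (Blk1 (n+2)) = trib n ∧
    Nat.card (Ts (n+1)) + trib n = trib (n+1) := by
  intro n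
  induction n using Nat.strong_induction_on with
  | _ n ih =>
    match n with
    | 0 =>
      have h1 : Nat.card (Blk1 2) = Nat.card (Blk1 1) + Nat.card (Ts 0) := cK1 0
      have h2 : Nat.card (Blk1 1) = 0 := Nat.card_of_isEmpty
      have h3 : Nat.card (Ts 1) = 1 + Nat.card (Blk 1) := by rw [cT, cS]
      have h4 : Nat.card (Blk 1) = 0 := Nat.card_of_isEmpty
      have h5 := cT0
      refine ⟨?_, ?_⟩
      · show Nat.card (Blk1 2) = 1
        omega
      · show Nat.card (Ts 1) + 1 = 2
        omega
    | 1 =>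
      have h1 : Nat.card (Blk1 3) = Nat.card (Blk1 2) + Nat.card (Ts 1) := cK1 1
      have h0 : Nat.card (Blk1 2) = trib 0 ∧ Nat.card (Ts 1) + trib 0 = trib 1 :=
        ih 0 (by omega)
      have h3 : Nat.card (Ts 2) = 1 + Nat.card (Blk 2) := by rw [cT, cS]
      have h4 : Nat.card (Blk 2) =
          Nat.card (Blk1 2) + (Nat.card (Blk2 2) + Nat.card (Blk3 2)) := cK 2
      have h5 : Nat.card (Blk2 2) = Nat.card (Blk1 0) := cK2 0
      have h6 : Nat.card (Blk1 0) = 0 := Nat.card_of_isEmpty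
      have h7 : Nat.card (Blk3 2) = 0 := Nat.card_of_isEmpty
      have t0 : trib 0 = 1 := rfl
      have t1 : trib 1 = 2 := rfl
      have t2 : trib 2 = 4 := rfl
      obtain ⟨h01, h02⟩ := h0
      refine ⟨?_, ?_⟩
      · show Nat.card (Blk1 3) = trib 1
        omega
      · show Nat.card (Ts 2) + trib 1 = trib 2
        omega
    | 2 =>
      have h1 : Nat.card (Blk1 4) = Nat.card (Blk1 3) + Nat.card (Ts 2) := cK1 2
      have h0 : Nat.card (Blk1 2) = trib 0 ∧ Nat.card (Ts 1) + trib 0 = trib 1 :=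
        ih 0 (by omega)
      have hA : Nat.card (Blk1 3) = trib 1 ∧ Nat.card (Ts 2) + trib 1 = trib 2 :=
        ih 1 (by omega)
      have h3 : Nat.card (Ts 3) = 1 + Nat.card (Blk 3) := by rw [cT, cS]
      have h4 : Nat.card (Blk 3) =
          Nat.card (Blk1 3) + (Nat.card (Blk2 3) + Nat.card (Blk3 3)) := cK 3
      have h5 : Nat.card (Blk2 3) = Nat.card (Blk1 1) := cK2 1
      have h6 : Nat.card (Blk1 1) = 0 := Nat.card_of_isEmpty
      have h7 : Nat.card (Blk3 3) = Nat.card (Blk 0) := cK3 0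
      have h8 : Nat.card (Blk 0) = 0 := Nat.card_of_isEmpty
      have t0 : trib 0 = 1 := rfl
      have t1 : trib 1 = 2 := rfl
      have t2 : trib 2 = 4 := rfl
      have t3 : trib 3 = 7 := rfl
      obtain ⟨h01, h02⟩ := h0
      obtain ⟨hA1, hA2⟩ := hA
      refine ⟨?_, ?_⟩
      · show Nat.card (Blk1 4) = trib 2
        omega
      · show Nat.card (Ts 3) + trib 2 = trib 3
        omega
    | (m+3) =>
      have hA : Nat.card (Blk1 (m+4)) = trib (m+2) ∧
          Nat.card (Ts (m+3)) + trib (m+2) = trib (m+3) := ih (m+2) (by omega)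
      have hB : Nat.card (Blk1 (m+2)) = trib m ∧
          Nat.card (Ts (m+1)) + trib m = trib (m+1) := ih m (by omega)
      have hK1 : Nat.card (Blk1 (m+5)) = Nat.card (Blk1 (m+4)) + Nat.card (Ts (m+3)) :=
        cK1 (m+3)
      have hT4 : Nat.card (Ts (m+4)) = 1 + Nat.card (Blk (m+4)) := by rw [cT, cS]
      have hK4 : Nat.card (Blk (m+4)) =
          Nat.card (Blk1 (m+4)) + (Nat.card (Blk2 (m+4)) + Nat.card (Blk3 (m+4))) := cK (m+4)
      have hK2' : Nat.card (Blk2 (m+4)) = Nat.card (Blk1 (m+2)) := cK2 (m+2)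
      have hK3' : Nat.card (Blk3 (m+4)) = Nat.card (Blk (m+1)) := cK3 (m+1)
      have hTK : Nat.card (Ts (m+1)) = 1 + Nat.card (Blk (m+1)) := by rw [cT, cS]
      have htr : trib (m+4) = trib (m+3) + trib (m+2) + trib (m+1) := trib3 (m+1)
      have htr2 : trib (m+3) = trib (m+2) + trib (m+1) + trib m := trib3 m
      obtain ⟨hA1, hA2⟩ := hA
      obtain ⟨hB1, hB2⟩ := hB
      refine ⟨?_, ?_⟩
      · show Nat.card (Blk1 (m+5)) = trib (m+3)
        omega
      · show Nat.card (Ts (m+4)) + trib (m+3) = trib (m+4)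
        omega

lemma F_eq (n : ℕ) : Nat.card (Fs n) = trib n := by
  induction n with
  | zero => exact cF0
  | succ n ih =>
    have h1 := cF n
    have h2 := (main n).2
    have h3 := cT n
    omega

lemma wcount_eq (n : ℕ) : wcount 2 1 n = Nat.card (Fs n) := by
  unfold wcount
  refine Nat.card_congr ⟨fun w => ⟨w.1.reverse, by simp [w.2.1], (isValid_iff w.1).mp w.2.2⟩,
    fun r => ⟨r.1.reverse, by simp [r.2.1],
      (isValid_iff r.1.reverse).mpr (by rw [List.reverse_reverse]; exact r.2.2)⟩,
    ?_, ?_⟩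
  · intro w; exact Subtype.ext (by simp)
  · intro r; exact Subtype.ext (by simp)

end T21

theorem stmt1 (n : ℕ) : wcount 2 1 n = trib n := by
  rw [T21.wcount_eq, T21.F_eq]
end

section
/- Let w_n = |W_{1/2,n}| be the number of binary words of length n such that every maximal factor of the form 0^a 1^b with a > 0 satisfies a/2 > b (equivalently a > 2b). Then w_n = w_{n-1} + w_{n-3} for all n ≥ 3, with w_0 = 1, w_1 = 2, w_2 = 3. -/
open List

/-- suffix of a replicate is a replicate -/
lemma suffix_replicate {x : Bool} {t s : List Bool} {k : ℕ}
    (h : List.replicate k x = t ++ s) : s = List.replicate s.length x := by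
  apply List.eq_replicate_of_mem
  intro b hb
  have : b ∈ List.replicate k x := h ▸ (List.mem_append_right t hb)
  exact (List.mem_replicate.1 this).2

lemma prefix_replicate_s2 {x : Bool} {t s : List Bool} {k : ℕ}
    (h : List.replicate k x = t ++ s) : t = List.replicate t.length x := by
  apply List.eq_replicate_of_mem
  intro b hb
  have : b ∈ List.replicate k x := h ▸ (List.mem_append_left s hb)
  exact (List.mem_replicate.1 this).2

lemma glast_append_ne {u v : List Bool} (hv : v ≠ []) :
    (u ++ v).getLast? = v.getLast? := by
  rcases v.eq_nil_or_concat with rfl | ⟨v', y, rfl⟩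
  · exact absurd rfl hv
  · simp only [List.concat_eq_append]
    rw [← List.append_assoc, List.getLast?_concat, List.getLast?_concat]

lemma glast_replicate_pos {a : ℕ} (ha : 0 < a) (x : Bool) :
    (List.replicate a x).getLast? = some x := by
  obtain ⟨n, rfl⟩ := Nat.exists_eq_add_of_lt ha
  rw [Nat.zero_add, List.replicate_succ', List.getLast?_concat]

lemma glast_append_replicate_pos (u : List Bool) {a : ℕ} (ha : 0 < a) (x : Bool) :
    (u ++ List.replicate a x).getLast? = some x := by
  rw [glast_append_ne (by simp [List.replicate_eq_nil_iff]; omega), glast_replicate_pos ha]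

lemma head?_append_ne {u v : List Bool} (hu : u ≠ []) :
    (u ++ v).head? = u.head? := by
  cases u with
  | nil => exact absurd rfl hu
  | cons x t => rfl

/-- uniqueness of the trailing-run decomposition -/
lemma trail_unique {x : Bool} {v1 v2 : List Bool} {k1 k2 : ℕ}
    (h : v1 ++ List.replicate k1 x = v2 ++ List.replicate k2 x)
    (h1 : v1 = [] ∨ v1.getLast? = some (!x))
    (h2 : v2 = [] ∨ v2.getLast? = some (!x)) :
    v1 = v2 ∧ k1 = k2 := by
  rcases List.append_eq_append_iff.1 h with ⟨t, ht1, ht2⟩ | ⟨t, ht1, ht2⟩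
  · -- v2 = v1 ++ t, replicate k1 x = t ++ replicate k2 x
    have htr : t = List.replicate t.length x := prefix_replicate_s2 ht2
    rcases t.eq_nil_or_concat with rfl | ⟨t', y, rfl⟩
    · simp only [List.append_nil] at ht1
      subst ht1
      have : k1 = k2 := by
        have := congrArg List.length ht2
        simp at this; omega
      exact ⟨rfl, this⟩
    · exfalso
      simp only [List.concat_eq_append] at ht1 ht2 htr
      have hy : y = x := by
        have : y ∈ List.replicate (t' ++ [y]).length x := by
          rw [← htr]; simp
        exact (List.mem_replicate.1 this).2
      have hlast : v2.getLast? = some x := by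
        rw [ht1, ← List.append_assoc, List.getLast?_concat, hy]
      rcases h2 with rfl | h2
      · simp at ht1
      · rw [h2] at hlast
        cases x <;> simp_all
  · -- v1 = v2 ++ t, replicate k2 x = t ++ replicate k1 x
    have htr : t = List.replicate t.length x := prefix_replicate_s2 ht2
    rcases t.eq_nil_or_concat with rfl | ⟨t', y, rfl⟩
    · simp only [List.append_nil] at ht1
      subst ht1
      have : k1 = k2 := by
        have := congrArg List.length ht2
        simp at this; omega
      exact ⟨rfl, this⟩
    · exfalso
      simp only [List.concat_eq_append] at ht1 ht2 htr
      have hy : y = x := by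
        have : y ∈ List.replicate (t' ++ [y]).length x := by
          rw [← htr]; simp
        exact (List.mem_replicate.1 this).2
      have hlast : v1.getLast? = some x := by
        rw [ht1, ← List.append_assoc, List.getLast?_concat, hy]
      rcases h1 with rfl | h1
      · simp at ht1
      · rw [h1] at hlast
        cases x <;> simp_all
lemma valid_nil_s2 (c d : ℕ) : isValid c d [] := by
  intro p s a b heq _ _ ha
  exfalso
  have := congrArg List.length heq
  simp at this
  omega

lemma valid_replicate_true (c d k : ℕ) : isValid c d (List.replicate k true) := by
  intro p s a b heq _ _ ha
  exfalso
  have hmem : (false : Bool) ∈ List.replicate k true := by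
    rw [heq]
    refine List.mem_append_left _ (List.mem_append_left _ (List.mem_append_right _ ?_))
    exact List.mem_replicate.2 ⟨by omega, rfl⟩
  simpa using (List.mem_replicate.1 hmem).2

lemma valid_concat_false {c d : ℕ} (hc : 0 < c) {w : List Bool} :
    isValid c d (w ++ [false]) ↔ isValid c d w := by
  constructor
  · intro h p s a b heq hp hs ha
    refine h p (s ++ [false]) a b (by rw [heq]; simp) hp ?_ ha
    rcases hs with rfl | hs
    · right; simp
    · right; rw [head?_append_ne (by rintro rfl; simp at hs), hs]
  · intro h p s a b heq hp hs ha
    rcases s.eq_nil_or_concat with rfl | ⟨s', y, rfl⟩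
    · simp only [List.append_nil] at heq
      rcases Nat.eq_zero_or_pos b with rfl | hb
      · simpa using Nat.mul_pos hc ha
      · exfalso
        have := congrArg List.getLast? heq
        rw [List.getLast?_concat, glast_append_replicate_pos _ hb] at this
        simp at this
    · simp only [List.concat_eq_append] at heq
      rw [← List.append_assoc] at heq
      obtain ⟨h1, h2⟩ := List.append_inj' heq (by simp)
      refine h p s' a b h1 hp ?_ ha
      rcases s' with _ | ⟨z, s''⟩
      · exact Or.inl rfl
      · right
        rcases hs with hs | hs
        · simp at hs
        · simpa using hs

lemma valid_block_iff {c d : ℕ} (hc : 0 < c) {u : List Bool} {a b : ℕ}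
    (hu : u = [] ∨ u.getLast? = some true) (ha : 0 < a) :
    isValid c d (u ++ List.replicate a false ++ List.replicate b true)
      ↔ isValid c d u ∧ d * b < c * a := by
  constructor
  · intro h
    constructor
    · intro p s a' b' heq hp hs ha'
      refine h p (s ++ List.replicate a false ++ List.replicate b true) a' b'
        (by rw [heq]; simp) hp ?_ ha'
      rcases hs with rfl | hs
      · right
        rw [List.nil_append, head?_append_ne (by simp [List.replicate_eq_nil_iff]; omega),
          List.head?_replicate]
        simp; omega
      · right
        rw [List.append_assoc, head?_append_ne (by rintro rfl; simp at hs), hs]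
    · exact h u [] a b (by simp) hu (Or.inl rfl) ha
  · rintro ⟨hv, hab⟩ p s a' b' heq hp hs ha'
    rcases Nat.eq_zero_or_pos b' with rfl | hb'
    · simpa using Nat.mul_pos hc ha'
    rcases hs with rfl | hs
    · -- s = [] : u ++ 0^a ++ 1^b = p ++ 0^a' ++ 1^b'
      simp only [List.append_nil] at heq
      -- strip trailing trues
      have hbb : u ++ List.replicate a false = p ++ List.replicate a' false ∧ b = b' := by
        refine trail_unique (x := true) heq ?_ ?_
        · right; rw [glast_append_replicate_pos _ ha]; rfl
        · right; rw [glast_append_replicate_pos _ ha']; rfl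
      obtain ⟨hba, rfl⟩ := hbb
      have huu : u = p ∧ a = a' := by
        refine trail_unique (x := false) hba ?_ ?_
        · rcases hu with rfl | hu
          · exact Or.inl rfl
          · right; rw [hu]; rfl
        · rcases hp with rfl | hp
          · exact Or.inl rfl
          · right; rw [hp]; rfl
      obtain ⟨rfl, rfl⟩ := huu
      exact hab
    · -- s ≠ [], head? s = some false
      have hsne : s ≠ [] := by rintro rfl; simp at hs
      rcases List.append_eq_append_iff.1 heq with ⟨t, ht1, ht2⟩ | ⟨t, ht1, ht2⟩
      · -- p ++ 0^a' ++ 1^b' = (u ++ 0^a) ++ t, 1^b = t ++ s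
        exfalso
        have : s = List.replicate s.length true := suffix_replicate ht2
        rw [this, List.head?_replicate] at hs
        by_cases h0 : s.length = 0 <;> simp [h0] at hs
      · -- u ++ 0^a = (p ++ 0^a' ++ 1^b') ++ t, s = t ++ 1^b
        have htne : t ≠ [] := by
          rintro rfl
          rw [List.nil_append] at ht2
          rw [ht2, List.head?_replicate] at hs
          by_cases h0 : b = 0 <;> simp [h0] at hs
        have hth : t.head? = some false := by
          rw [ht2, head?_append_ne htne] at hs
          exact hs
        rcases List.append_eq_append_iff.1 ht1 with ⟨r, hr1, hr2⟩ | ⟨r, hr1, hr2⟩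
        · -- p ++ 0^a' ++ 1^b' = u ++ r, 0^a = r ++ t
          have hrrep : r = List.replicate r.length false := prefix_replicate_s2 hr2
          rcases r.eq_nil_or_concat with rfl | ⟨r', y, rfl⟩
          · simp only [List.append_nil] at hr1
            exact hv p [] a' b' (by rw [← hr1]; simp) hp (Or.inl rfl) ha'
          · exfalso
            simp only [List.concat_eq_append] at hr1 hrrep
            have hy : y = false := by
              have : y ∈ List.replicate (r' ++ [y]).length false := by rw [← hrrep]; simp
              exact (List.mem_replicate.1 this).2
            have h1 := congrArg List.getLast? hr1
            rw [glast_append_replicate_pos _ hb',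
              ← List.append_assoc, List.getLast?_concat, hy] at h1
            simp at h1
        · -- u = (p ++ 0^a' ++ 1^b') ++ r, t = r ++ 0^a
          refine hv p r a' b' hr1 hp ?_ ha'
          rcases r with _ | ⟨z, r'⟩
          · exact Or.inl rfl
          · right
            rw [hr2, head?_append_ne (by simp)] at hth
            exact hth
/-- number of trailing `x`'s -/
def tcount (x : Bool) (w : List Bool) : ℕ := (w.reverse.takeWhile (· == x)).length

/-- word with trailing `x`'s removed -/
def trim (x : Bool) (w : List Bool) : List Bool := (w.reverse.dropWhile (· == x)).reverse

lemma trim_spec (x : Bool) (w : List Bool) :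
    w = trim x w ++ List.replicate (tcount x w) x := by
  have h3 : w.reverse.takeWhile (· == x) = List.replicate (tcount x w) x := by
    apply List.eq_replicate_of_mem
    intro b hb
    simpa using List.mem_takeWhile_imp hb
  conv_lhs => rw [← List.reverse_reverse w,
    ← List.takeWhile_append_dropWhile (p := (· == x)) (l := w.reverse)]
  rw [List.reverse_append, h3]
  simp [trim]

lemma trim_getLast (x : Bool) (w : List Bool) :
    trim x w = [] ∨ (trim x w).getLast? = some (!x) := by
  rcases hne : w.reverse.dropWhile (· == x) with _ | ⟨z, l⟩
  · left; simp [trim, hne]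
  · right
    have hz : ¬ (z == x) = true := by
      have := List.head_dropWhile_not (· == x) (l := w.reverse) (by rw [hne]; simp)
      simpa [hne] using this
    have hzx : z = !x := by cases z <;> cases x <;> simp_all
    rw [trim, hne, List.getLast?_reverse]
    simp [hzx]

lemma trim_canon {x : Bool} {v : List Bool} {k : ℕ}
    (hv : v = [] ∨ v.getLast? = some (!x)) :
    trim x (v ++ List.replicate k x) = v ∧ tcount x (v ++ List.replicate k x) = k :=
  trail_unique (trim_spec x (v ++ List.replicate k x)).symm
    (trim_getLast x (v ++ List.replicate k x)) hv

lemma trim_length (x : Bool) (w : List Bool) :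
    (trim x w).length + tcount x w = w.length := by
  have := congrArg List.length (trim_spec x w)
  simp at this
  omega
def WSet (n : ℕ) : Set (List Bool) := {w | w.length = n ∧ isValid 1 2 w}

lemma WSet_finite (n : ℕ) : (WSet n).Finite :=
  (List.finite_length_eq Bool n).subset (fun _ hw => hw.1)

lemma wcount_eq (n : ℕ) : wcount 1 2 n = (WSet n).ncard := by
  rw [wcount, ← Nat.card_coe_set_eq]
  rfl

lemma glast_ff (l : List Bool) : (l ++ [false, false]).getLast? = some false := by
  rw [show l ++ [false, false] = (l ++ [false]) ++ [false] by simp, List.getLast?_concat]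

/-- the insertion map `u 0^a 1^k ↦ u 0^(a+2) 1^(k+1)`, `1^k ↦ 1^(k+3)` -/
def Fmap (w : List Bool) : List Bool :=
  if trim true w = [] then List.replicate (w.length + 3) true
  else trim true w ++ false :: false :: List.replicate (tcount true w + 1) true

lemma decomp_of_trim_ne {w : List Bool} (hne : trim true w ≠ []) :
    ∃ u a, (u = [] ∨ u.getLast? = some true) ∧ 0 < a ∧
      trim true w = u ++ List.replicate a false := by
  have hvl : (trim true w).getLast? = some false := by
    rcases trim_getLast true w with h | h
    · exact absurd h hne
    · simpa using h
  refine ⟨trim false (trim true w), tcount false (trim true w), ?_, ?_,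
    trim_spec false (trim true w)⟩
  · rcases trim_getLast false (trim true w) with h | h
    · exact Or.inl h
    · right; simpa using h
  · by_contra h0
    have h0' : tcount false (trim true w) = 0 := by omega
    have hts := trim_spec false (trim true w)
    rw [h0'] at hts; simp at hts
    rcases trim_getLast false (trim true w) with h | h
    · rw [← hts] at h; exact hne h
    · rw [← hts, hvl] at h; simp at h

lemma rep_shift (u X : List Bool) {a : ℕ} (h3 : 3 ≤ a) :
    u ++ List.replicate a false ++ X
      = (u ++ List.replicate (a - 2) false) ++ false :: false :: X := by
  conv_lhs => rw [show a = (a - 2) + 2 from by omega]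
  rw [List.replicate_add]
  simp only [List.append_assoc]
  rfl

lemma Fmap_last (w : List Bool) : (Fmap w).getLast? = some true := by
  by_cases h : trim true w = []
  · rw [Fmap, if_pos h]
    exact glast_replicate_pos (by omega) true
  · rw [Fmap, if_neg h]
    rw [show trim true w ++ false :: false :: List.replicate (tcount true w + 1) true
        = (trim true w ++ [false, false]) ++ List.replicate (tcount true w + 1) true by simp,
      glast_append_replicate_pos _ (by omega)]

lemma Fmap_inj : Function.Injective Fmap := by
  intro w1 w2 h
  by_cases h1 : trim true w1 = [] <;> by_cases h2 : trim true w2 = []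
  · rw [Fmap, Fmap, if_pos h1, if_pos h2] at h
    have hlen : w1.length = w2.length := by
      have := congrArg List.length h; simp at this; omega
    have e1 := trim_length true w1
    have e2 := trim_length true w2
    rw [h1] at e1; rw [h2] at e2; simp at e1 e2
    rw [trim_spec true w1, trim_spec true w2, h1, h2, e1, e2, hlen]
  · exfalso
    rw [Fmap, Fmap, if_pos h1, if_neg h2] at h
    have : (false : Bool) ∈ List.replicate (w1.length + 3) true := by
      rw [h]; exact List.mem_append_right _ (by simp)
    simpa using (List.mem_replicate.1 this).2
  · exfalso
    rw [Fmap, Fmap, if_neg h1, if_pos h2] at h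
    have : (false : Bool) ∈ List.replicate (w2.length + 3) true := by
      rw [← h]; exact List.mem_append_right _ (by simp)
    simpa using (List.mem_replicate.1 this).2
  · rw [Fmap, Fmap, if_neg h1, if_neg h2] at h
    have h' : (trim true w1 ++ [false, false]) ++ List.replicate (tcount true w1 + 1) true
        = (trim true w2 ++ [false, false]) ++ List.replicate (tcount true w2 + 1) true := by
      simpa [List.append_assoc] using h
    obtain ⟨e1, e2⟩ := trail_unique h' (by right; rw [glast_ff]; rfl)
      (by right; rw [glast_ff]; rfl)
    have e1' : trim true w1 = trim true w2 := List.append_cancel_right e1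
    have e2' : tcount true w1 = tcount true w2 := by omega
    rw [trim_spec true w1, trim_spec true w2, e1', e2']

lemma key (m : ℕ) :
    WSet (m + 3) = (fun w => w ++ [false]) '' WSet (m + 2) ∪ Fmap '' WSet m := by
  ext w
  constructor
  · rintro ⟨hlen, hval⟩
    rcases w.eq_nil_or_concat with rfl | ⟨w', y, rfl⟩
    · simp at hlen
    simp only [List.concat_eq_append] at hlen hval ⊢
    cases y
    · -- ends in false
      left
      exact ⟨w', ⟨by simpa using hlen, (valid_concat_false one_pos).1 hval⟩, rfl⟩
    · -- ends in true
      right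
      set w := w' ++ [true] with hwdef
      have hk : 0 < tcount true w := by
        by_contra hk
        have hk0 : tcount true w = 0 := by omega
        have hsp := trim_spec true w
        rw [hk0] at hsp; simp at hsp
        rcases trim_getLast true w with h | h
        · rw [← hsp] at h; simp [hwdef] at h
        · rw [← hsp, hwdef, List.getLast?_concat] at h; simp at h
      by_cases hv : trim true w = []
      · -- all-true word
        have hw : w = List.replicate (tcount true w) true := by
          have := trim_spec true w; rwa [hv, List.nil_append] at this
        have hkl : tcount true w = m + 3 := by
          have := congrArg List.length hw; simp at this; omega
        refine ⟨List.replicate m true, ⟨by simp, valid_replicate_true 1 2 m⟩, ?_⟩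
        have htr : trim true (List.replicate m true) = [] ∧
            tcount true (List.replicate m true) = m := by
          have := trim_canon (x := true) (v := []) (k := m) (Or.inl rfl)
          simpa using this
        rw [Fmap, if_pos htr.1, hw, hkl]
        simp
      · obtain ⟨u, a, hu, ha, hdec⟩ := decomp_of_trim_ne hv
        have hw : w = u ++ List.replicate a false ++ List.replicate (tcount true w) true := by
          conv_lhs => rw [trim_spec true w, hdec]
        have hval' := (valid_block_iff one_pos hu ha).1 (hw ▸ hval)
        have ha3 : 3 ≤ a := by
          have := hval'.2
          have := hk
          omega
        set k := tcount true w with hkdef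
        have hlen' : u.length + a + k = m + 3 := by
          have := congrArg List.length hw
          simp [hlen] at this
          omega
        refine ⟨u ++ List.replicate (a - 2) false ++ List.replicate (k - 1) true,
          ⟨by simp; omega, ?_⟩, ?_⟩
        · refine (valid_block_iff one_pos hu (by omega)).2 ⟨hval'.1, ?_⟩
          have := hval'.2
          omega
        · -- Fmap of candidate = w
          have hcanon := trim_canon (x := true) (v := u ++ List.replicate (a - 2) false)
            (k := k - 1)
            (by right; rw [glast_append_replicate_pos _ (by omega : 0 < a - 2)]; rfl)
          have hne2 : u ++ List.replicate (a - 2) false ≠ [] := by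
            intro hc
            have := congrArg List.length hc
            simp at this
            omega
          rw [Fmap, hcanon.1, hcanon.2, if_neg hne2]
          rw [hw]
          have hk1 : k - 1 + 1 = k := by omega
          rw [hk1, rep_shift u _ ha3]
  · rintro (⟨w', ⟨hl, hv⟩, rfl⟩ | ⟨w', ⟨hl, hv⟩, rfl⟩)
    · exact ⟨by simp [hl], (valid_concat_false one_pos).2 hv⟩
    · by_cases hveq : trim true w' = []
      · rw [Fmap, if_pos hveq]
        exact ⟨by simp [hl], valid_replicate_true 1 2 _⟩
      · obtain ⟨u, a, hu, ha, hdec⟩ := decomp_of_trim_ne hveq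
        set k := tcount true w' with hkdef
        have hw : w' = u ++ List.replicate a false ++ List.replicate k true := by
          conv_lhs => rw [trim_spec true w', hdec]
        have hval' := (valid_block_iff one_pos hu ha).1 (hw ▸ hv)
        have hF : Fmap w' = u ++ List.replicate (a + 2) false
            ++ List.replicate (k + 1) true := by
          rw [rep_shift u _ (by omega : 3 ≤ a + 2), Nat.add_sub_cancel,
            Fmap, if_neg hveq, hdec]
        rw [hF]
        constructor
        · have := congrArg List.length hw
          simp [hl] at this
          simp
          omega
        · refine (valid_block_iff one_pos hu (by omega)).2 ⟨hval'.1, ?_⟩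
          have := hval'.2
          omega

lemma concat_false_inj : Function.Injective (fun w : List Bool => w ++ [false]) := by
  intro a b h
  exact List.append_cancel_right h

lemma wcount_rec (m : ℕ) : wcount 1 2 (m + 3) = wcount 1 2 (m + 2) + wcount 1 2 m := by
  rw [wcount_eq, wcount_eq, wcount_eq, key m,
    Set.ncard_union_eq ?_ ((WSet_finite (m+2)).image _) ((WSet_finite m).image _),
    Set.ncard_image_of_injective _ concat_false_inj,
    Set.ncard_image_of_injective _ Fmap_inj]
  rw [Set.disjoint_left]
  rintro w ⟨w1, _, rfl⟩ ⟨w2, _, hw2⟩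
  have h1 : (w1 ++ [false]).getLast? = some false := List.getLast?_concat
  have h2 := Fmap_last w2
  rw [hw2] at h2
  rw [h1] at h2
  simp at h2
lemma valid_false : isValid 1 2 [false] := by
  have := (valid_concat_false (c := 1) (d := 2) one_pos (w := [])).2 (valid_nil_s2 1 2)
  simpa using this

lemma valid_true : isValid 1 2 [true] := by
  simpa using valid_replicate_true 1 2 1

lemma valid_ff : isValid 1 2 [false, false] := by
  have := (valid_concat_false (c := 1) (d := 2) one_pos (w := [false])).2 valid_false
  simpa using this

lemma valid_tf : isValid 1 2 [true, false] := by
  have := (valid_concat_false (c := 1) (d := 2) one_pos (w := [true])).2 valid_true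
  simpa using this

lemma valid_tt : isValid 1 2 [true, true] := by
  simpa using valid_replicate_true 1 2 2

lemma not_valid_ft : ¬ isValid 1 2 [false, true] := by
  intro h
  have h2 := (valid_block_iff (c := 1) (d := 2) one_pos (u := [])
    (Or.inl rfl) (a := 1) (b := 1) one_pos).1 (by simpa using h)
  omega

lemma wcount0 : wcount 1 2 0 = 1 := by
  rw [wcount_eq]
  have : WSet 0 = {([] : List Bool)} := by
    ext w
    constructor
    · rintro ⟨h1, _⟩
      simpa using List.length_eq_zero_iff.1 h1
    · rintro rfl
      exact ⟨rfl, valid_nil_s2 1 2⟩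
  rw [this, Set.ncard_singleton]

lemma wcount1 : wcount 1 2 1 = 2 := by
  rw [wcount_eq]
  have : WSet 1 = {[false], [true]} := by
    ext w
    constructor
    · rintro ⟨h1, _⟩
      rcases w with _ | ⟨x, _ | ⟨y, t⟩⟩ <;> simp at h1
      cases x
      · left; rfl
      · right; rfl
    · rintro (rfl | rfl)
      · exact ⟨rfl, valid_false⟩
      · exact ⟨rfl, valid_true⟩
  rw [this, Set.ncard_pair (by simp)]

lemma wcount2 : wcount 1 2 2 = 3 := by
  rw [wcount_eq]
  have : WSet 2 = {[false, false], [true, false], [true, true]} := by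
    ext w
    constructor
    · rintro ⟨h1, h2⟩
      rcases w with _ | ⟨x, _ | ⟨y, _ | ⟨z, t⟩⟩⟩ <;> simp at h1
      cases x <;> cases y
      · left; rfl
      · exact absurd h2 not_valid_ft
      · right; left; rfl
      · right; right; rfl
    · rintro (rfl | rfl | rfl)
      · exact ⟨rfl, valid_ff⟩
      · exact ⟨rfl, valid_tf⟩
      · exact ⟨rfl, valid_tt⟩
  rw [this, Set.ncard_insert_of_notMem (by simp), Set.ncard_pair (by simp)]

theorem stmt2 :
    wcount 1 2 0 = 1 ∧ wcount 1 2 1 = 2 ∧ wcount 1 2 2 = 3 ∧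
    ∀ n : ℕ, 3 ≤ n → wcount 1 2 n = wcount 1 2 (n - 1) + wcount 1 2 (n - 3) := by
  refine ⟨wcount0, wcount1, wcount2, ?_⟩
  intro n hn
  obtain ⟨m, rfl⟩ : ∃ m, n = m + 3 := ⟨n - 3, by omega⟩
  have h := wcount_rec m
  have e1 : m + 3 - 1 = m + 2 := by omega
  have e3 : m + 3 - 3 = m := by omega
  rw [e1, e3, h]
end

section
/- For every integer k ≥ 1 and natural number n, the number of binary words of length n such that every maximal factor of the form 0^a 1^b with a > 0 satisfies ka > b, denoted w_n, satisfies the (k+1)-step Fibonacci recurrence w_n = w_{n-1} + w_{n-2} + ... + w_{n-(k+1)} for n ≥ k+1. -/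
namespace Ktheorem
open List

-- ones uniqueness
lemma ones_unique : ∀ (b b' : ℕ) (s s' : List Bool),
    (s = [] ∨ s.head? = some false) → (s' = [] ∨ s'.head? = some false) →
    List.replicate b true ++ s = List.replicate b' true ++ s' → b = b' ∧ s = s' := by
  intro b
  induction b with
  | zero =>
    intro b' s s' hs hs' h
    simp only [List.replicate_zero, List.nil_append] at h
    rcases b' with _ | b'
    · simpa using h
    · exfalso
      rw [List.replicate_succ] at h
      subst h
      rcases hs with h | h <;> simp at h
  | succ b ih =>
    intro b' s s' hs hs' h
    rcases b' with _ | b'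
    · exfalso
      rw [List.replicate_succ] at h
      simp only [List.replicate_zero, List.nil_append] at h
      rcases hs' with h' | h' <;> rw [← h] at h' <;> simp at h'
    · rw [List.replicate_succ, List.replicate_succ] at h
      simp only [List.cons_append, List.cons.injEq, true_and] at h
      obtain ⟨hb, hseq⟩ := ih b' s s' hs hs' h
      exact ⟨by omega, hseq⟩

lemma zeros_unique : ∀ (a a' : ℕ) (v v' : List Bool),
    (v = [] ∨ v.head? = some true) → (v' = [] ∨ v'.head? = some true) →
    List.replicate a false ++ v = List.replicate a' false ++ v' → a = a' ∧ v = v' := by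
  intro a
  induction a with
  | zero =>
    intro a' v v' hv hv' h
    simp only [List.replicate_zero, List.nil_append] at h
    rcases a' with _ | a'
    · simpa using h
    · exfalso
      rw [List.replicate_succ] at h
      subst h
      rcases hv with h | h <;> simp at h
  | succ a ih =>
    intro a' v v' hv hv' h
    rcases a' with _ | a'
    · exfalso
      rw [List.replicate_succ] at h
      simp only [List.replicate_zero, List.nil_append] at h
      rcases hv' with h' | h' <;> rw [← h] at h' <;> simp at h'
    · rw [List.replicate_succ, List.replicate_succ] at h
      simp only [List.cons_append, List.cons.injEq, true_and] at h
      obtain ⟨ha, hveq⟩ := ih a' v v' hv hv' h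
      exact ⟨by omega, hveq⟩


variable {k : ℕ}

lemma valid_nil : isValid k 1 [] := by
  intro p s a b h hp hs ha
  have := congrArg List.length h
  simp at this
  omega

lemma valid_cons_true {w : List Bool} : isValid k 1 (true :: w) ↔ isValid k 1 w := by
  constructor
  · intro h p s a b hw hp hs ha
    refine h (true :: p) s a b (by rw [hw]; simp) ?_ hs ha
    right
    rcases hp with rfl | hp
    · rfl
    · rcases List.getLast?_eq_some_iff.1 hp with ⟨p₀, rfl⟩
      rw [show true :: (p₀ ++ [true]) = (true :: p₀) ++ [true] by simp]
      exact List.getLast?_concat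
  · intro h p s a b hw hp hs ha
    rcases p with _ | ⟨x, p'⟩
    · exfalso
      simp only [List.nil_append] at hw
      rcases a with _ | a
      · omega
      · rw [List.replicate_succ] at hw
        simp at hw
    · simp only [List.cons_append, List.cons.injEq] at hw
      refine h p' s a b hw.2 ?_ hs ha
      rcases p' with _ | ⟨y, p''⟩
      · exact Or.inl rfl
      · right
        rcases hp with hp | hp
        · simp at hp
        · rwa [List.getLast?_cons_cons] at hp

lemma valid_replicate_false (hk : 1 ≤ k) (j : ℕ) : isValid k 1 (List.replicate j false) := by
  intro p s a b h hp hs ha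
  have hb : b = 0 := by
    by_contra hb
    have : true ∈ List.replicate j false := by
      rw [h]
      have : true ∈ List.replicate b true := List.mem_replicate.2 ⟨hb, rfl⟩
      simp only [List.mem_append, List.mem_replicate]
      tauto
    simp at this
  subst hb
  have : 0 < k * a := Nat.mul_pos hk ha
  simpa using this


lemma head?_replicate_append {x : Bool} {m : ℕ} (hm : 0 < m) (t : List Bool) :
    (List.replicate m x ++ t).head? = some x := by
  rcases m with _ | m
  · omega
  · rw [List.replicate_succ]; rfl

lemma valid_block (hk : 1 ≤ k) {a b : ℕ} {s : List Bool} (ha : 0 < a) (hb : 0 < b)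
    (hs : s = [] ∨ s.head? = some false) :
    isValid k 1 (List.replicate a false ++ List.replicate b true ++ s)
      ↔ b < k * a ∧ isValid k 1 s := by
  constructor
  · intro h
    constructor
    · have := h [] s a b (by simp) (Or.inl rfl) hs ha
      simpa using this
    · intro p' s'' a' b' hseq hp' hs'' ha'
      refine h (List.replicate a false ++ List.replicate b true ++ p') s'' a' b' ?_ ?_ hs'' ha'
      · rw [hseq]; simp [List.append_assoc]
      · right
        rcases hp' with rfl | hp'
        · rcases b with _ | b
          · omega
          · rw [List.append_nil, List.replicate_succ']
            rw [show List.replicate a false ++ (List.replicate b true ++ [true])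
                = (List.replicate a false ++ List.replicate b true) ++ [true] by simp]
            exact List.getLast?_concat
        · rcases List.getLast?_eq_some_iff.1 hp' with ⟨p₀, rfl⟩
          rw [show List.replicate a false ++ List.replicate b true ++ (p₀ ++ [true])
              = (List.replicate a false ++ List.replicate b true ++ p₀) ++ [true] by simp]
          exact List.getLast?_concat
  · rintro ⟨hlt, hvs⟩ p s2 a' b' hw hp hs2 ha'
    rcases hp with rfl | hp
    · simp only [List.nil_append] at hw
      rcases Nat.eq_zero_or_pos b' with rfl | hb'
      · simpa using Nat.mul_pos hk ha'
      · obtain ⟨rfl, h2⟩ := zeros_unique a a' (List.replicate b true ++ s)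
          (List.replicate b' true ++ s2)
          (Or.inr (head?_replicate_append hb _))
          (Or.inr (head?_replicate_append hb' _))
          (by simpa [List.append_assoc] using hw)
        obtain ⟨rfl, rfl⟩ := ones_unique b b' s s2 hs hs2 h2
        simpa using hlt
    · rcases List.getLast?_eq_some_iff.1 hp with ⟨p₀, rfl⟩
      have hw' : List.replicate a false ++ (List.replicate b true ++ s)
          = (p₀ ++ [true]) ++ (List.replicate a' false ++ (List.replicate b' true ++ s2)) := by
        simpa [List.append_assoc] using hw
      rcases List.append_eq_append_iff.1 hw' with ⟨e, hpe, h2⟩ | ⟨c', hc1, hc2⟩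
      · rcases List.append_eq_append_iff.1 h2 with ⟨e₂, he, h3⟩ | ⟨c₂, hc, h4⟩
        · refine hvs e₂ s2 a' b' (by simpa [List.append_assoc] using h3) ?_ hs2 ha'
          rcases e₂ with _ | ⟨x, e₂'⟩
          · exact Or.inl rfl
          · right
            have h5 : p₀ ++ [true] = (List.replicate a false ++ List.replicate b true)
                ++ (x :: e₂') := by rw [hpe, he]; simp [List.append_assoc]
            have := List.getLast?_concat (a := true) (l := p₀)
            rw [h5, List.getLast?_append_of_ne_nil _ (by simp)] at this
            exact this
        · rcases c₂ with _ | ⟨x, c₂'⟩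
          · simp only [List.append_nil] at hc
            simp only [List.nil_append] at h4
            exact hvs [] s2 a' b' (by simp [h4.symm, List.append_assoc]) (Or.inl rfl) hs2 ha'
          · exfalso
            have hx : x = true := by
              have : x ∈ List.replicate b true := by rw [hc]; simp
              simpa using List.eq_of_mem_replicate this
            have := congrArg List.head? h4
            rw [head?_replicate_append ha', hx] at this
            simp at this
      · exfalso
        have : true ∈ List.replicate a false := by
          rw [hc1]; simp
        simp at this

/-- number of leading `true`s -/
def lt : List Bool → ℕ
  | [] => 0
  | false :: _ => 0
  | true :: u => lt u + 1

lemma lt_le_length (u : List Bool) : lt u ≤ u.length := by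
  induction u with
  | nil => simp [lt]
  | cons x u ih => cases x <;> simp [lt] <;> omega

lemma lt_decomp (u : List Bool) : ∃ s, u = List.replicate (lt u) true ++ s ∧
    (s = [] ∨ s.head? = some false) := by
  induction u with
  | nil => exact ⟨[], by simp [lt]⟩
  | cons x u ih =>
    cases x
    · exact ⟨false :: u, by simp [lt]⟩
    · obtain ⟨s, hu, hs⟩ := ih
      exact ⟨s, by rw [lt, List.replicate_succ]; simpa using hu, hs⟩

lemma valid_replicate_true_append {t : ℕ} {s : List Bool} :
    isValid k 1 (List.replicate t true ++ s) ↔ isValid k 1 s := by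
  induction t with
  | zero => simp
  | succ t ih => rw [List.replicate_succ, List.cons_append, valid_cons_true, ih]

/-- the key step lemma for the `Y` recursion, 1-branch -/
lemma valid_zeros_one (hk : 1 ≤ k) {j : ℕ} (hj : 0 < j) (u : List Bool) :
    isValid k 1 (List.replicate j false ++ (true :: u))
      ↔ (1 + lt u < k * j ∧ isValid k 1 u) := by
  obtain ⟨s, hu, hs⟩ := lt_decomp u
  have h1 : true :: u = List.replicate (1 + lt u) true ++ s := by
    rw [show 1 + lt u = lt u + 1 from by omega, List.replicate_succ]
    simpa using hu
  rw [h1, ← List.append_assoc, valid_block hk hj (by omega) hs]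
  constructor
  · rintro ⟨h2, h3⟩
    exact ⟨h2, by rw [hu, valid_replicate_true_append]; exact h3⟩
  · rintro ⟨h2, h3⟩
    rw [hu, valid_replicate_true_append] at h3
    exact ⟨h2, h3⟩

lemma valid_zeros_cons_false (j : ℕ) (u : List Bool) :
    List.replicate j false ++ (false :: u) = List.replicate (j+1) false ++ u := by
  rw [List.replicate_succ']; simp


/-! ### numeric double sequence -/

def XY (k : ℕ) : ℕ → (ℕ → ℕ) × (ℕ → ℕ)
  | 0 => (fun _ => 1, fun _ => 1)
  | m+1 =>
    ((fun c => (if c = 0 then 0 else (XY k m).1 (c-1)) + (XY k m).2 1),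
     (fun j => (XY k m).2 (j+1) + (if k*j ≤ 1 then 0 else (XY k m).1 (k*j-2))))

def Xn (k c m : ℕ) : ℕ := (XY k m).1 c
def Yn (k j m : ℕ) : ℕ := (XY k m).2 j
def Wn (k m : ℕ) : ℕ := Xn k m m

lemma Xn_zero (c : ℕ) : Xn k c 0 = 1 := rfl
lemma Yn_zero (j : ℕ) : Yn k j 0 = 1 := rfl
lemma Xn_succ (c m : ℕ) :
    Xn k c (m+1) = (if c = 0 then 0 else Xn k (c-1) m) + Yn k 1 m := rfl
lemma Yn_succ (j m : ℕ) :
    Yn k j (m+1) = Yn k (j+1) m + (if k*j ≤ 1 then 0 else Xn k (k*j-2) m) := rfl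

/-! ### sets -/

def SX (k c m : ℕ) : Set (List Bool) := {w | w.length = m ∧ isValid k 1 w ∧ lt w ≤ c}
def SY (k j m : ℕ) : Set (List Bool) :=
  {u | u.length = m ∧ isValid k 1 (List.replicate j false ++ u)}

lemma SX_finite (c m : ℕ) : (SX k c m).Finite :=
  (List.finite_length_eq Bool m).subset (fun w hw => hw.1)
lemma SY_finite (j m : ℕ) : (SY k j m).Finite :=
  (List.finite_length_eq Bool m).subset (fun w hw => hw.1)

lemma ncard_split (S A B : Set (List Bool)) (hS : ([] : List Bool) ∉ S)
    (hA : ∀ w, (true :: w) ∈ S ↔ w ∈ A) (hB : ∀ w, (false :: w) ∈ S ↔ w ∈ B)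
    (hAf : A.Finite) (hBf : B.Finite) :
    S.ncard = A.ncard + B.ncard := by
  have hinj : ∀ x : Bool, Function.Injective (fun w : List Bool => x :: w) := by
    intro x w1 w2 h; simpa using h
  have hSeq : S = (fun w => true :: w) '' A ∪ (fun w => false :: w) '' B := by
    ext w
    constructor
    · intro hw
      rcases w with _ | ⟨x, w'⟩
      · exact absurd hw hS
      · cases x
        · exact Or.inr ⟨w', (hB w').1 hw, rfl⟩
        · exact Or.inl ⟨w', (hA w').1 hw, rfl⟩
    · rintro (⟨w', hw', rfl⟩ | ⟨w', hw', rfl⟩)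
      · exact (hA w').2 hw'
      · exact (hB w').2 hw'
  rw [hSeq, Set.ncard_union_eq ?_ (hAf.image _) (hBf.image _),
    Set.ncard_image_of_injective _ (hinj true), Set.ncard_image_of_injective _ (hinj false)]
  rw [Set.disjoint_left]
  rintro w ⟨w1, -, rfl⟩ ⟨w2, -, h⟩
  simp at h

lemma cards (hk : 1 ≤ k) : ∀ m : ℕ,
    (∀ c, (SX k c m).ncard = Xn k c m) ∧ (∀ j, 0 < j → (SY k j m).ncard = Yn k j m) := by
  intro m
  induction m with
  | zero =>
    constructor
    · intro c
      have : SX k c 0 = {([] : List Bool)} := by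
        ext w
        simp only [SX, Set.mem_setOf_eq, Set.mem_singleton_iff, List.length_eq_zero_iff]
        constructor
        · tauto
        · rintro rfl; exact ⟨rfl, valid_nil, by simp [lt]⟩
      rw [this, Set.ncard_singleton, Xn_zero]
    · intro j hj
      have : SY k j 0 = {([] : List Bool)} := by
        ext w
        simp only [SY, Set.mem_setOf_eq, Set.mem_singleton_iff, List.length_eq_zero_iff]
        constructor
        · tauto
        · rintro rfl
          exact ⟨rfl, by rw [List.append_nil]; exact valid_replicate_false hk j⟩
      rw [this, Set.ncard_singleton, Yn_zero]
  | succ m ih =>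
    constructor
    · intro c
      rw [ncard_split (SX k c (m+1))
        (if c = 0 then ∅ else SX k (c-1) m) (SY k 1 m) ?_ ?_ ?_ ?_ (SY_finite 1 m)]
      · rw [Xn_succ, (ih.2 1 one_pos)]
        rcases Nat.eq_zero_or_pos c with rfl | hc
        · simp
        · rw [if_neg (by omega), if_neg (by omega), ih.1 (c-1)]
      · intro h; exact absurd h.1 (by simp)
      · intro w
        simp only [SX, Set.mem_setOf_eq, List.length_cons]
        rcases Nat.eq_zero_or_pos c with rfl | hc
        · simp [lt]
        · rw [if_neg (by omega)]
          simp only [SX, Set.mem_setOf_eq, lt, valid_cons_true]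
          constructor
          · rintro ⟨h1, h2, h3⟩; exact ⟨by omega, h2, by omega⟩
          · rintro ⟨h1, h2, h3⟩; exact ⟨by omega, h2, by omega⟩
      · intro w
        simp only [SX, SY, Set.mem_setOf_eq, List.length_cons, lt]
        constructor
        · rintro ⟨h1, h2, -⟩
          exact ⟨by omega, by simpa using h2⟩
        · rintro ⟨h1, h2⟩
          exact ⟨by omega, by simpa using h2, by omega⟩
      · split
        · exact Set.finite_empty
        · exact SX_finite _ m
    · intro j hj
      rw [ncard_split (SY k j (m+1))
        (if k*j ≤ 1 then ∅ else SX k (k*j-2) m) (SY k (j+1) m) ?_ ?_ ?_ ?_ (SY_finite _ m)]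
      · rw [Yn_succ, ih.2 (j+1) (by omega)]
        rcases le_or_gt (k*j) 1 with hc | hc
        · simp [if_pos hc]
        · rw [if_neg (by omega), if_neg (by omega), ih.1 (k*j-2)]
          omega
      · intro h
        have := h.1
        simp at this
      · intro u
        simp only [SY, Set.mem_setOf_eq, List.length_cons, valid_zeros_one hk hj]
        rcases le_or_gt (k*j) 1 with hc | hc
        · simp only [if_pos hc, Set.mem_empty_iff_false, iff_false]
          rintro ⟨-, h2, -⟩; omega
        · rw [if_neg (by omega)]
          simp only [SX, Set.mem_setOf_eq]
          constructor
          · rintro ⟨h1, h2, h3⟩; exact ⟨by omega, h3, by omega⟩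
          · rintro ⟨h1, h2, h3⟩; exact ⟨by omega, by omega, h2⟩
      · intro u
        simp only [SY, Set.mem_setOf_eq, List.length_cons, valid_zeros_cons_false]
        constructor
        · rintro ⟨h1, h2⟩; exact ⟨by omega, h2⟩
        · rintro ⟨h1, h2⟩; exact ⟨by omega, h2⟩
      · split
        · exact Set.finite_empty
        · exact SX_finite _ m

lemma wcount_eq (hk : 1 ≤ k) (m : ℕ) : wcount k 1 m = Wn k m := by
  have h1 : wcount k 1 m = ({w : List Bool | w.length = m ∧ isValid k 1 w}).ncard :=
    Nat.card_coe_set_eq _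
  have h2 : {w : List Bool | w.length = m ∧ isValid k 1 w} = SX k m m := by
    ext w
    simp only [SX, Set.mem_setOf_eq]
    constructor
    · rintro ⟨h1, h2⟩
      exact ⟨h1, h2, le_trans (lt_le_length w) (le_of_eq h1)⟩
    · tauto
  rw [h1, h2, (cards hk m).1 m]; rfl

lemma Wn_succ (m : ℕ) : Wn k (m+1) = Wn k m + Yn k 1 m := by
  show Xn k (m+1) (m+1) = _
  rw [Xn_succ, if_neg (by omega)]
  rfl

lemma Wn_zero : Wn k 0 = 1 := rfl

/-- the X lemma, additively -/
lemma NX : ∀ m c : ℕ, Xn k c m + (if c + 1 ≤ m then Wn k (m - (c+1)) else 0) = Wn k m := by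
  intro m
  induction m with
  | zero => intro c; simp [Xn_zero, Wn_zero]
  | succ m ih =>
    intro c
    rcases Nat.eq_zero_or_pos c with rfl | hc
    · rw [Xn_succ, if_pos rfl, if_pos (by omega), Nat.zero_add,
        show m + 1 - (0+1) = m by omega, Wn_succ]
      omega
    · rw [Xn_succ, if_neg (by omega), Wn_succ]
      have h := ih (c-1)
      rcases le_or_gt (c+1) (m+1) with hle | hlt
      · rw [if_pos hle]
        rw [if_pos (by omega : c - 1 + 1 ≤ m)] at h
        have : m - (c - 1 + 1) = m + 1 - (c+1) := by omega
        rw [this] at h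
        omega
      · rw [if_neg (by omega)]
        rw [if_neg (by omega)] at h
        omega

/-- main claim statement -/
def P (k m : ℕ) : Prop := ∀ j, 0 < j →
  Yn k j m = (∑ i ∈ Finset.range (min (k*j) m), Wn k (m - 1 - i)) + (if m < k*j then 1 else 0)

/-- recurrence, conditional on P below -/
lemma NR (hk : 1 ≤ k) {M : ℕ} (hP : ∀ m' < M, P k m') :
    ∀ m ≤ M, k + 1 ≤ m → Wn k m = ∑ i ∈ Finset.range (k+1), Wn k (m - (i+1)) := by
  intro m hmM hm
  obtain ⟨m', rfl⟩ : ∃ m', m = m' + 1 := ⟨m - 1, by omega⟩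
  have h := hP m' (by omega) 1 one_pos
  simp only [mul_one] at h
  rw [min_eq_left (by omega), if_neg (by omega), Nat.add_zero] at h
  rw [Wn_succ, h, Finset.sum_range_succ', show m' + 1 - (0+1) = m' by omega]
  have h2 : (∑ i ∈ Finset.range k, Wn k (m' + 1 - (i + 1 + 1)))
      = ∑ i ∈ Finset.range k, Wn k (m' - 1 - i) :=
    Finset.sum_congr rfl (fun i _ => by congr 1; omega)
  rw [h2]
  omega

lemma sum_two_pow (n : ℕ) : (∑ i ∈ Finset.range n, 2^i) + 1 = 2^n := by
  induction n with
  | zero => simp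
  | succ n ih =>
    rw [Finset.sum_range_succ, pow_succ]
    omega

/-- powers of two for small indices, conditional on P below -/
lemma NL (hk : 1 ≤ k) {M : ℕ} (hP : ∀ m' < M, P k m') :
    ∀ t, t ≤ k → t ≤ M → Wn k t = 2^t := by
  intro t
  induction t using Nat.strong_induction_on with
  | _ t IH =>
    intro htk htM
    rcases Nat.eq_zero_or_pos t with rfl | ht
    · simp [Wn_zero]
    · obtain ⟨t', rfl⟩ : ∃ t', t = t' + 1 := ⟨t - 1, by omega⟩
      rw [Wn_succ]
      have h := hP t' (by omega) 1 one_pos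
      rw [min_eq_right (by omega : t' ≤ k * 1), if_pos (by omega)] at h
      rw [h]
      have h2 : (∑ i ∈ Finset.range t', Wn k (t' - 1 - i))
          = ∑ i ∈ Finset.range t', 2 ^ (t' - 1 - i) := by
        refine Finset.sum_congr rfl (fun i hi => ?_)
        simp only [Finset.mem_range] at hi
        exact IH (t' - 1 - i) (by omega) (by omega) (by omega)
      rw [h2, Finset.sum_range_reflect (fun i => (2:ℕ)^i) t']
      have h6 := sum_two_pow t'
      have h7 := IH t' (by omega) (by omega) (by omega)
      rw [h7, pow_succ]
      omega

/-- the "small-W" summation identity -/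
lemma NS (hk : 1 ≤ k) {M : ℕ} (hP : ∀ m' < M, P k m') :
    ∀ T, T ≤ k → T ≤ M → (∑ i ∈ Finset.range T, Wn k (T - 1 - i)) + 1 = Wn k T := by
  intro T hTk hTM
  have h2 : (∑ i ∈ Finset.range T, Wn k (T - 1 - i))
      = ∑ i ∈ Finset.range T, 2 ^ (T - 1 - i) := by
    refine Finset.sum_congr rfl (fun i hi => ?_)
    simp only [Finset.mem_range] at hi
    exact NL hk hP (T - 1 - i) (by omega) (by omega)
  rw [h2, Finset.sum_range_reflect (fun i => (2:ℕ)^i) T, NL hk hP T hTk hTM]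
  exact sum_two_pow T

lemma NC (hk : 1 ≤ k) : ∀ m, P k m := by
  intro m
  induction m using Nat.strong_induction_on with
  | _ m IH =>
    rcases Nat.eq_zero_or_pos m with rfl | hm
    · intro j hj
      rw [Yn_zero]
      simp only [Nat.min_zero, Finset.range_zero, Finset.sum_empty, Nat.zero_add]
      rw [if_pos (by positivity)]
    · obtain ⟨m', rfl⟩ : ∃ m', m = m' + 1 := ⟨m - 1, by omega⟩
      intro j hj
      have hprod : k * (j+1) = k * j + k := by ring
      rw [Yn_succ]
      have hIH := IH m' (by omega) (j+1) (by omega)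
      rcases lt_or_ge (m'+1) (k*j) with hA | hAB
      · -- Case A : m'+1 < k*j
        have hkj2 : 2 ≤ k * j := by omega
        have hX : Xn k (k*j-2) m' = Wn k m' := by
          have := NX (k := k) m' (k*j-2)
          rwa [if_neg (by omega), Nat.add_zero] at this
        rw [if_neg (show ¬ (k*j ≤ 1) by omega), hX]
        rw [min_eq_right (by omega : m' ≤ k * (j+1)),
          if_pos (show m' < k * (j+1) by omega)] at hIH
        rw [hIH, min_eq_right (by omega : m' + 1 ≤ k*j),
          if_pos (show m' + 1 < k * j by omega)]
        rw [Finset.sum_range_succ']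
        have h2 : (∑ i ∈ Finset.range m', Wn k (m' + 1 - 1 - (i+1)))
            = ∑ i ∈ Finset.range m', Wn k (m' - 1 - i) :=
          Finset.sum_congr rfl (fun i _ => by congr 1; omega)
        rw [h2, show m' + 1 - 1 - 0 = m' by omega]
        omega
      · -- now k*j ≤ m'+1 ; set q with k*j = q+1
        obtain ⟨q, hq⟩ : ∃ q, k * j = q + 1 := ⟨k*j - 1, by have := Nat.mul_pos (show 0 < k by omega) hj; omega⟩
        have hsplit : (∑ i ∈ Finset.range (k*j), Wn k (m' + 1 - 1 - i))
            = Wn k m' + ∑ i ∈ Finset.range q, Wn k (m' - 1 - i) := by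
          rw [hq, Finset.sum_range_succ', show m' + 1 - 1 - 0 = m' by omega]
          have h2 : (∑ i ∈ Finset.range q, Wn k (m' + 1 - 1 - (i+1)))
              = ∑ i ∈ Finset.range q, Wn k (m' - 1 - i) :=
            Finset.sum_congr rfl (fun i _ => by congr 1; omega)
          rw [h2]
          omega
        rcases lt_or_ge m' (k * (j+1)) with hB | hC
        · -- Case B : k*j ≤ m'+1 ≤ and m' < k*(j+1)
          rw [min_eq_right (le_of_lt hB), if_pos hB] at hIH
          rw [min_eq_left hAB, if_neg (show ¬ (m' + 1 < k*j) by omega), hIH, hsplit]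
          set T := m' + 1 - k*j with hT
          have hTk : T ≤ k := by omega
          have hNS := NS hk (M := m'+1) (fun m'' h => IH m'' h) T (by omega) (by omega)
          have hms : m' = q + T := by omega
          have hsum2 : (∑ i ∈ Finset.range m', Wn k (m' - 1 - i))
              = (∑ i ∈ Finset.range q, Wn k (m' - 1 - i))
                + ∑ i ∈ Finset.range T, Wn k (T - 1 - i) := by
            conv_lhs => rw [hms, Finset.sum_range_add]
            congr 1
            · exact Finset.sum_congr rfl (fun i _ => by congr 1; omega)
            · refine Finset.sum_congr rfl (fun i hi => ?_)
              simp only [Finset.mem_range] at hi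
              congr 1; omega
          rw [hsum2]
          rcases le_or_gt (k*j) 1 with hkj1 | hkj2
          · -- k*j = 1 : X branch absent, and T = m'
            rw [if_pos hkj1]
            have hq0 : q = 0 := by omega
            have hTm : T = m' := by omega
            rw [hq0, Finset.range_zero, Finset.sum_empty, hTm]
            rw [hTm] at hNS
            omega
          · rw [if_neg (show ¬ (k*j ≤ 1) by omega)]
            have hX := NX (k := k) m' (k*j-2)
            rw [if_pos (show k*j-2+1 ≤ m' by omega), show m' - (k*j-2+1) = T by omega] at hX
            omega
        · -- Case C : k*(j+1) ≤ m'
          rw [min_eq_left (by omega : k*(j+1) ≤ m'),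
            if_neg (show ¬ (m' < k*(j+1)) by omega)] at hIH
          rw [min_eq_left (by omega : k*j ≤ m'+1),
            if_neg (show ¬ (m'+1 < k*j) by omega), hIH, hsplit]
          set N := m' - q with hN
          have hNk : k + 1 ≤ N := by omega
          have hNR := NR hk (M := m'+1) (fun m'' h => IH m'' h) N (by omega) hNk
          have hsum2 : (∑ i ∈ Finset.range (k*(j+1)), Wn k (m' - 1 - i))
              = (∑ i ∈ Finset.range q, Wn k (m' - 1 - i))
                + ∑ i ∈ Finset.range (k+1), Wn k (N - (i+1)) := by
            rw [show k*(j+1) = q + (k+1) by omega, Finset.sum_range_add]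
            congr 1
            refine Finset.sum_congr rfl (fun i hi => ?_)
            congr 1; omega
          rw [hsum2, ← hNR]
          rcases le_or_gt (k*j) 1 with hkj1 | hkj2
          · rw [if_pos hkj1]
            have hq0 : q = 0 := by omega
            have hNm : N = m' := by omega
            rw [hq0, Finset.range_zero, Finset.sum_empty, hNm]
            omega
          · rw [if_neg (show ¬ (k*j ≤ 1) by omega)]
            have hX := NX (k := k) m' (k*j-2)
            rw [if_pos (show k*j-2+1 ≤ m' by omega), show m' - (k*j-2+1) = N by omega] at hX
            omega

/-- final recurrence -/
lemma Wn_rec (hk : 1 ≤ k) {n : ℕ} (hn : k + 1 ≤ n) :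
    Wn k n = ∑ i ∈ Finset.range (k+1), Wn k (n - (i+1)) :=
  NR hk (M := n+1) (fun m' _ => NC hk m') n (by omega) hn


end Ktheorem

theorem stmt5 (k : ℕ) (hk : 1 ≤ k) (n : ℕ) (hn : k + 1 ≤ n) :
    wcount k 1 n = ∑ i ∈ Finset.range (k + 1), wcount k 1 (n - (i + 1)) := by
  rw [Ktheorem.wcount_eq hk, Ktheorem.Wn_rec hk hn]
  exact Finset.sum_congr rfl (fun i _ => (Ktheorem.wcount_eq hk _).symm)
end

section
/- Let q = c/d be a positive rational in lowest terms. The map ψ, which sends 1^k to 1^{k+c+d} and sends v·1^ℓ (where v ends in 0) to v·0^d·1^c·1^ℓ, is a bijection from W_{q,n} onto the set of words in W_{q,n+c+d} ending in at least c ones. -/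
/-- Insert the spawning infix `0^d 1^c` just after the rightmost 0; if there is
no 0, append `c + d` ones. -/
def psi (c d : ℕ) (w : List Bool) : List Bool :=
  if w.all (fun b => b) then w ++ List.replicate (c + d) true
  else
    let l := (w.reverse.takeWhile (fun b => b)).length
    w.take (w.length - l) ++ List.replicate d false ++ List.replicate (c + l) true

section StmtAux
open List

-- trailing true count helper facts
lemma takeWhile_rep_append (b : ℕ) (v : List Bool) :
    takeWhile (fun x => x) (replicate b true ++ v) = replicate b true ++ takeWhile (fun x => x) v := by
  induction b with
  | zero => simp
  | succ k ih => simp [replicate_succ, takeWhile, ih]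

lemma tt_eq (u : List Bool) (b : ℕ) (hu : u = [] ∨ u.getLast? = some false) :
    ((u ++ replicate b true).reverse.takeWhile (fun x => x)).length = b := by
  rw [reverse_append, reverse_replicate, takeWhile_rep_append]
  rcases hu with h | h
  · simp [h]
  · obtain ⟨t, ht⟩ : ∃ t, u.reverse = false :: t := by
      have : u.reverse.head? = some false := by rw [head?_reverse]; exact h
      cases hr : u.reverse with
      | nil => rw [hr] at this; simp at this
      | cons x xs => rw [hr] at this; simp at this; exact ⟨xs, by rw [this]⟩
    rw [ht]
    simp [takeWhile]

lemma takeWhile_repf_append (b : ℕ) (v : List Bool) :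
    takeWhile (fun x => !x) (replicate b false ++ v) = replicate b false ++ takeWhile (fun x => !x) v := by
  induction b with
  | zero => simp
  | succ k ih => simp [replicate_succ, takeWhile, ih]

lemma tf_eq (u : List Bool) (b : ℕ) (hu : u = [] ∨ u.getLast? = some true) :
    ((u ++ replicate b false).reverse.takeWhile (fun x => !x)).length = b := by
  rw [reverse_append, reverse_replicate, takeWhile_repf_append]
  rcases hu with h | h
  · simp [h]
  · obtain ⟨t, ht⟩ : ∃ t, u.reverse = true :: t := by
      have : u.reverse.head? = some true := by rw [head?_reverse]; exact h
      cases hr : u.reverse with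
      | nil => rw [hr] at this; simp at this
      | cons x xs => rw [hr] at this; simp at this; exact ⟨xs, by rw [this]⟩
    rw [ht]
    simp [takeWhile]

-- uniqueness of block decomposition
lemma block_unique {x p : List Bool} {A B a b : ℕ}
    (hx : x = [] ∨ x.getLast? = some true) (hp : p = [] ∨ p.getLast? = some true)
    (hA : 0 < A) (ha : 0 < a)
    (h : x ++ replicate A false ++ replicate B true = p ++ replicate a false ++ replicate b true) :
    x = p ∧ A = a ∧ B = b := by
  have hBb : B = b := by
    have e1 := tt_eq (x ++ replicate A false) B (Or.inr (by
      rw [getLast?_append]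
      have : (replicate A false : List Bool).getLast? = some false := by
        cases A with
        | zero => omega
        | succ k => simp [replicate_succ']
      rw [this]; rfl))
    have e2 := tt_eq (p ++ replicate a false) b (Or.inr (by
      rw [getLast?_append]
      have : (replicate a false : List Bool).getLast? = some false := by
        cases a with
        | zero => omega
        | succ k => simp [replicate_succ']
      rw [this]; rfl))
    rw [append_assoc] at e1 e2
    rw [← e1, ← e2, ← append_assoc, ← append_assoc, h]
  subst hBb
  have h2 : x ++ replicate A false = p ++ replicate a false := by
    exact (append_inj' h (by simp)).1
  have hAa : A = a := by
    have e1 := tf_eq x A hx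
    have e2 := tf_eq p a hp
    rw [← e1, ← e2, h2]
  subst hAa
  have := append_inj' h2 (by simp)
  exact ⟨this.1, rfl, rfl⟩

lemma valid_replicate (c d k : ℕ) (hc : 0 < c) : isValid c d (replicate k true) := by
  intro p s a b heq hp hs ha
  exfalso
  have : false ∈ replicate k true := by
    rw [heq]
    refine mem_append.2 (Or.inl (mem_append.2 (Or.inl (mem_append.2 (Or.inr ?_)))))
    exact mem_replicate.2 ⟨by omega, rfl⟩
  simp [mem_replicate] at this

example : True := trivial

lemma head?_repf {A : ℕ} (hA : 0 < A) (v : List Bool) :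
    (replicate A false ++ v).head? = some false := by
  cases A with
  | zero => omega
  | succ k => simp [replicate_succ]

lemma true_region {x : List Bool} {A B j : ℕ}
    (h : (x ++ replicate A false ++ replicate B true)[j]? = some true) :
    j < x.length ∨ x.length + A ≤ j := by
  by_contra hcon
  push_neg at hcon
  obtain ⟨h1, h2⟩ := hcon
  rw [append_assoc, getElem?_append_right h1, getElem?_append] at h
  rw [if_pos (by simp; omega)] at h
  rw [getElem?_replicate, if_pos (by omega)] at h
  simp at h

lemma false_region {x : List Bool} {A B j : ℕ}
    (h : (x ++ replicate A false ++ replicate B true)[j]? = some false)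
    (hj : x.length ≤ j) : j < x.length + A := by
  by_contra hcon
  push_neg at hcon
  rw [getElem?_append_right (by simp; omega), getElem?_replicate] at h
  split at h <;> simp at h

lemma valid_block_iff_s6 (c d : ℕ) {x : List Bool} {A B : ℕ}
    (hx : x = [] ∨ x.getLast? = some true) (hA : 0 < A) (hc : 0 < c) :
    isValid c d (x ++ replicate A false ++ replicate B true) ↔ isValid c d x ∧ d * B < c * A := by
  constructor
  · intro hv
    constructor
    · intro p s a b heq hp hs ha
      apply hv p (s ++ replicate A false ++ replicate B true) a b ?_ hp ?_ ha
      · rw [heq]; simp [append_assoc]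
      · right
        rcases hs with rfl | hs
        · simp [head?_repf hA]
        · rw [append_assoc, head?_append, hs]; rfl
    · exact hv x [] A B (by simp) hx (Or.inl rfl) hA
  · rintro ⟨hxv, hab⟩ p s a b heq hp hs ha
    rcases hs with rfl | hs
    · simp only [append_nil] at heq
      obtain ⟨rfl, rfl, rfl⟩ := block_unique hx hp hA ha heq
      exact hab
    · obtain ⟨s', rfl⟩ : ∃ s', s = false :: s' := by
        cases s with
        | nil => simp at hs
        | cons y ys => simp at hs; exact ⟨ys, by rw [hs]⟩
      rcases Nat.eq_zero_or_pos b with rfl | hb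
      · simpa using Nat.mul_pos hc ha
      · set i := p.length + a + b with hi
        have hWf : (x ++ replicate A false ++ replicate B true)[i]? = some false := by
          rw [heq, getElem?_append_right (by simp only [length_append, length_replicate]; omega)]
          simp only [length_append, length_replicate]
          rw [show i - (p.length + a + b) = 0 by omega]
          simp
        have hWt : (x ++ replicate A false ++ replicate B true)[i-1]? = some true := by
          rw [heq, append_assoc (p ++ replicate a false),
            getElem?_append_right (by simp only [length_append, length_replicate]; omega)]
          rw [getElem?_append, if_pos (by simp only [length_append, length_replicate]; omega),
            getElem?_replicate, if_pos (by simp only [length_append, length_replicate]; omega)]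
        have hix : i ≤ x.length := by
          by_contra hgt
          push_neg at hgt
          have h1 := false_region hWf (by omega)
          rcases true_region hWt with h2 | h2 <;> omega
        have hpre : p ++ replicate a false ++ replicate b true <+: x := by
          apply prefix_of_prefix_length_le (l₃ := x ++ replicate A false ++ replicate B true)
          · exact ⟨false :: s', heq.symm⟩
          · exact ⟨replicate A false ++ replicate B true, by simp [append_assoc]⟩
          · simp only [length_append, length_replicate]; omega
        obtain ⟨t, ht⟩ := hpre
        have hteq : t ++ (replicate A false ++ replicate B true) = false :: s' := by
          apply append_cancel_left (as := p ++ replicate a false ++ replicate b true)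
          rw [← append_assoc, ht, ← append_assoc]
          exact heq
        apply hxv p t a b ht.symm hp ?_ ha
        rcases eq_or_ne t [] with rfl | htne
        · exact Or.inl rfl
        · right
          have := congrArg List.head? hteq
          rw [head?_append] at this
          cases ht' : t.head? with
          | none => exact absurd (head?_eq_none_iff.1 ht') htne
          | some v => rw [ht'] at this; simp at this; simp [ht', this]

lemma decomp (w : List Bool) (hw : ¬ (w.all (fun b => b) = true)) :
    ∃ x A, (x = [] ∨ x.getLast? = some true) ∧ 0 < A ∧
      w = x ++ replicate A false ++ replicate ((w.reverse.takeWhile (fun b => b)).length) true ∧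
      w.take (w.length - (w.reverse.takeWhile (fun b => b)).length) = x ++ replicate A false := by
  set B := (w.reverse.takeWhile (fun b => b)).length with hB
  set r := w.reverse.dropWhile (fun b => b) with hr
  have hsplit : replicate B true ++ r = w.reverse := by
    have h1 : w.reverse.takeWhile (fun b => b) = replicate B true :=
      eq_replicate_iff.2 ⟨rfl, fun y hy => by simpa using mem_takeWhile_imp hy⟩
    rw [← h1]; exact takeWhile_append_dropWhile
  have hrne : r ≠ [] := by
    intro h0
    apply hw
    rw [all_eq_true]
    intro y hy
    have hy' : y ∈ w.reverse := mem_reverse.2 hy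
    rw [← hsplit, h0, append_nil] at hy'
    simpa using eq_of_mem_replicate hy'
  have hrhead : r.head? = some false := by
    have hmatch := head?_dropWhile_not (fun b => b) w.reverse
    rw [← hr] at hmatch
    cases hh : r.head? with
    | none => exact absurd (head?_eq_none_iff.1 hh) hrne
    | some v => rw [hh] at hmatch; simp at hmatch; rw [hmatch]
  have hw1 : w = r.reverse ++ replicate B true := by
    have h2 := congrArg reverse hsplit
    rw [reverse_append, reverse_replicate, reverse_reverse] at h2
    exact h2.symm
  set A := (r.takeWhile (fun b => !b)).length with hA'
  set r2 := r.dropWhile (fun b => !b) with hr2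
  have hsplit2 : replicate A false ++ r2 = r := by
    have h1 : r.takeWhile (fun b => !b) = replicate A false :=
      eq_replicate_iff.2 ⟨rfl, fun y hy => by simpa using mem_takeWhile_imp hy⟩
    rw [← h1]; exact takeWhile_append_dropWhile
  have hA : 0 < A := by
    obtain ⟨t, ht⟩ : ∃ t, r = false :: t := by
      cases hh : r with
      | nil => exact absurd hh hrne
      | cons y ys =>
        rw [hh] at hrhead; simp at hrhead; exact ⟨ys, by rw [hrhead]⟩
    rw [hA', ht]
    simp [takeWhile]
  have hx : r2.reverse = [] ∨ (r2.reverse).getLast? = some true := by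
    cases hh : r2.head? with
    | none => exact Or.inl (by rw [head?_eq_none_iff.1 hh]; rfl)
    | some v =>
      right
      have hmatch := head?_dropWhile_not (fun b => !b) r
      rw [← hr2, hh] at hmatch
      simp at hmatch
      rw [getLast?_reverse, hh, hmatch]
  have hwE : w = (r2.reverse ++ replicate A false) ++ replicate B true := by
    rw [hw1]
    congr 1
    rw [← hsplit2, reverse_append, reverse_replicate]
  refine ⟨r2.reverse, A, hx, hA, hwE, ?_⟩
  rw [hwE, length_append, length_replicate, Nat.add_sub_cancel]
  rw [take_left' rfl]

def phi (c d : ℕ) (w : List Bool) : List Bool :=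
  if w.all (fun b => b) then w.take (w.length - (c + d))
  else
    let l := (w.reverse.takeWhile (fun b => b)).length
    w.take (w.length - (l + d)) ++ List.replicate (l - c) true

lemma psi_eq (c d : ℕ) (w : List Bool) (hall : ¬(w.all (fun b => b) = true)) :
    psi c d w = w.take (w.length - (w.reverse.takeWhile (fun b => b)).length) ++
      replicate d false ++ replicate (c + (w.reverse.takeWhile (fun b => b)).length) true := by
  rw [psi, if_neg hall]

lemma phi_eq (c d : ℕ) (w : List Bool) (hall : ¬(w.all (fun b => b) = true)) :
    phi c d w = w.take (w.length - ((w.reverse.takeWhile (fun b => b)).length + d)) ++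
      replicate ((w.reverse.takeWhile (fun b => b)).length - c) true := by
  rw [phi, if_neg hall]

lemma take_block (x : List Bool) (A B k : ℕ) (hk : k ≤ A) :
    (x ++ replicate A false ++ replicate B true).take (x.length + k) = x ++ replicate k false := by
  have hA2 : (replicate A false : List Bool) = replicate k false ++ replicate (A-k) false := by
    rw [← replicate_add]; congr 1; omega
  rw [hA2, ← append_assoc]
  rw [show x ++ replicate k false ++ replicate (A - k) false ++ replicate B true
      = (x ++ replicate k false) ++ (replicate (A - k) false ++ replicate B true) by
    rw [append_assoc]]
  exact take_left' (by simp)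

lemma not_all_block {x : List Bool} {A B : ℕ} (hA : 0 < A) :
    ¬((x ++ replicate A false ++ replicate B true).all (fun b => b) = true) := by
  intro h
  have hf : false ∈ x ++ replicate A false ++ replicate B true :=
    mem_append.2 (Or.inl (mem_append.2 (Or.inr (mem_replicate.2 ⟨by omega, rfl⟩))))
  have := all_eq_true.1 h false hf
  simp at this

lemma glast {x : List Bool} {A : ℕ} (hA : 0 < A) :
    (x ++ replicate A false).getLast? = some false := by
  rw [getLast?_append]
  have : (replicate A false : List Bool).getLast? = some false := by
    cases A with
    | zero => omega
    | succ k => simp [replicate_succ']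
  rw [this]; rfl

lemma tt_block {x : List Bool} {A B : ℕ} (hA : 0 < A) :
    ((x ++ replicate A false ++ replicate B true).reverse.takeWhile (fun b => b)).length = B :=
  tt_eq (x ++ replicate A false) B (Or.inr (glast hA))

lemma psi_block (c d : ℕ) {x : List Bool} {A B : ℕ} (hA : 0 < A) :
    psi c d (x ++ replicate A false ++ replicate B true)
      = x ++ replicate (A + d) false ++ replicate (c + B) true := by
  rw [psi_eq c d _ (not_all_block hA), tt_block hA]
  rw [show (x ++ replicate A false ++ replicate B true).length - B = x.length + A by
    simp; omega]
  rw [take_block x A B A le_rfl, replicate_add]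
  simp [append_assoc]

lemma tt_ge {w : List Bool} {k : ℕ} (h : replicate k true <:+ w) :
    k ≤ (w.reverse.takeWhile (fun b => b)).length := by
  obtain ⟨u, rfl⟩ := h
  rw [reverse_append, reverse_replicate, takeWhile_rep_append]
  simp

lemma phi_block (c d : ℕ) {x : List Bool} {A B : ℕ} (hA : 0 < A) (hdA : d ≤ A) (hcB : c ≤ B) :
    phi c d (x ++ replicate A false ++ replicate B true)
      = x ++ replicate (A - d) false ++ replicate (B - c) true := by
  rw [phi_eq c d _ (not_all_block hA), tt_block hA]
  rw [show (x ++ replicate A false ++ replicate B true).length - (B + d) = x.length + (A - d) by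
    simp; omega]
  rw [take_block x A B (A - d) (by omega)]


end StmtAux

open List in
theorem stmt6 (c d : ℕ) (hc : 0 < c) (hd : 0 < d) (hcd : Nat.Coprime c d) (n : ℕ) :
    Set.BijOn (psi c d)
      {w : List Bool | w.length = n ∧ isValid c d w}
      {w : List Bool | w.length = n + c + d ∧ isValid c d w ∧
        List.replicate c true <:+ w} := by
  apply Set.InvOn.bijOn (f' := phi c d)
  · constructor
    · -- LeftInvOn : phi ∘ psi = id on S
      rintro w ⟨hlen, hval⟩
      by_cases hall : w.all (fun b => b) = true
      · rw [psi, if_pos hall]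
        have hall2 : (w ++ replicate (c + d) true).all (fun b => b) = true := by
          rw [all_eq_true] at hall ⊢
          intro y hy
          rcases mem_append.1 hy with h | h
          · exact hall y h
          · simp [eq_of_mem_replicate h]
        rw [phi, if_pos hall2]
        rw [show (w ++ replicate (c + d) true).length - (c + d) = w.length by simp]
        exact take_left' rfl
      · obtain ⟨x, A, hx, hA, hwE, -⟩ := decomp w hall
        rw [hwE, psi_block c d hA, phi_block c d (by omega) (by omega) (by omega)]
        rw [show A + d - d = A by omega, show c + (w.reverse.takeWhile (fun b => b)).length - c
            = (w.reverse.takeWhile (fun b => b)).length by omega]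
    · -- RightInvOn : psi ∘ phi = id on T
      rintro w ⟨hlen, hval, hsuf⟩
      by_cases hall : w.all (fun b => b) = true
      · have hwrep : w = replicate (n + c + d) true :=
          eq_replicate_iff.2 ⟨hlen, fun b hb => by simpa using all_eq_true.1 hall b hb⟩
        rw [phi, if_pos hall, hlen, show n + c + d - (c + d) = n by omega, hwrep, take_replicate]
        have hall3 : ((replicate (min n (n + c + d)) true : List Bool)).all (fun b => b) = true := by
          rw [all_eq_true]; intro y hy; simp [eq_of_mem_replicate hy]
        rw [psi, if_pos hall3, ← replicate_add,
          show min n (n + c + d) + (c + d) = n + c + d by omega]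
      · obtain ⟨x, A, hx, hA, hwE, -⟩ := decomp w hall
        have hval' := hval
        rw [hwE] at hval'
        have hp := (valid_block_iff_s6 c d hx hA hc).1 hval'
        have hcl : c ≤ (w.reverse.takeWhile (fun b => b)).length := tt_ge hsuf
        have hdA : d < A := by
          have h1 : c * d < c * A := by
            calc c * d = d * c := Nat.mul_comm c d
            _ ≤ d * (w.reverse.takeWhile (fun b => b)).length := Nat.mul_le_mul_left d hcl
            _ < c * A := hp.2
          exact Nat.lt_of_mul_lt_mul_left h1
        rw [hwE, phi_block c d hA (by omega) hcl, psi_block c d (by omega)]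
        rw [show A - d + d = A by omega, show c + ((w.reverse.takeWhile (fun b => b)).length - c)
            = (w.reverse.takeWhile (fun b => b)).length by omega]
  · -- MapsTo psi S T
    rintro w ⟨hlen, hval⟩
    by_cases hall : w.all (fun b => b) = true
    · rw [psi, if_pos hall]
      have hwrep : w = replicate n true :=
        eq_replicate_iff.2 ⟨hlen, fun b hb => by simpa using all_eq_true.1 hall b hb⟩
      refine ⟨by simp only [length_append, length_replicate, hlen]; omega, ?_, ?_⟩
      · rw [hwrep, ← replicate_add]; exact valid_replicate c d _ hc
      · exact ⟨w ++ replicate d true, by rw [append_assoc, ← replicate_add, Nat.add_comm d c]⟩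
    · obtain ⟨x, A, hx, hA, hwE, -⟩ := decomp w hall
      have hval' := hval
      rw [hwE] at hval' hlen
      have hp := (valid_block_iff_s6 c d hx hA hc).1 hval'
      rw [hwE, psi_block c d hA]
      refine ⟨?_, ?_, ?_⟩
      · simp only [length_append, length_replicate] at hlen ⊢; omega
      · apply (valid_block_iff_s6 c d hx (by omega) hc).2
        refine ⟨hp.1, ?_⟩
        have e3 := hp.2
        have e1 : d * (c + (w.reverse.takeWhile (fun b => b)).length)
            = d * c + d * (w.reverse.takeWhile (fun b => b)).length := by rw [Nat.mul_add]
        have e2 : c * (A + d) = c * A + c * d := by rw [Nat.mul_add]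
        rw [e1, e2, Nat.mul_comm d c]
        omega
      · have hrep : replicate (c + (w.reverse.takeWhile (fun b => b)).length) true
            = replicate ((w.reverse.takeWhile (fun b => b)).length) true ++ replicate c true := by
          rw [← replicate_add, Nat.add_comm]
        exact ⟨x ++ replicate (A + d) false
            ++ replicate ((w.reverse.takeWhile (fun b => b)).length) true,
          by rw [hrep, append_assoc (x ++ replicate (A + d) false)]⟩
  · -- MapsTo phi T S
    rintro w ⟨hlen, hval, hsuf⟩
    by_cases hall : w.all (fun b => b) = true
    · have hwrep : w = replicate (n + c + d) true :=
        eq_replicate_iff.2 ⟨hlen, fun b hb => by simpa using all_eq_true.1 hall b hb⟩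
      rw [phi, if_pos hall, hlen, show n + c + d - (c + d) = n by omega, hwrep, take_replicate]
      exact ⟨by simp only [length_replicate]; omega, valid_replicate c d _ hc⟩
    · obtain ⟨x, A, hx, hA, hwE, -⟩ := decomp w hall
      have hval' := hval
      rw [hwE] at hval' hlen
      have hp := (valid_block_iff_s6 c d hx hA hc).1 hval'
      have hcl : c ≤ (w.reverse.takeWhile (fun b => b)).length := tt_ge hsuf
      have hdA : d < A := by
        have h1 : c * d < c * A := by
          calc c * d = d * c := Nat.mul_comm c d
          _ ≤ d * (w.reverse.takeWhile (fun b => b)).length := Nat.mul_le_mul_left d hcl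
          _ < c * A := hp.2
        exact Nat.lt_of_mul_lt_mul_left h1
      rw [hwE, phi_block c d hA (by omega) hcl]
      refine ⟨?_, ?_⟩
      · simp only [length_append, length_replicate] at hlen ⊢; omega
      · apply (valid_block_iff_s6 c d hx (by omega) hc).2
        refine ⟨hp.1, ?_⟩
        have e3 := hp.2
        have e1 : d * (w.reverse.takeWhile (fun b => b)).length
            = d * ((w.reverse.takeWhile (fun b => b)).length - c) + d * c := by
          rw [← Nat.mul_add]; congr 1; omega
        have e2 : c * A = c * (A - d) + c * d := by rw [← Nat.mul_add]; congr 1; omega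
        rw [e1, e2, Nat.mul_comm d c] at e3
        exact Nat.lt_of_add_lt_add_right e3
end
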